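/- arXiv:1502.02873 — 6 statements merged into one kernel-verified Lean document; each statement's English description precedes it below -/
import Mathlib

section
/- Let X and Y be (k+1)-element singular subsets of the thin polar space Π_n with k+1 ≤ n−1. If some element of X \ Y is collinear to all elements of Y, then the distance between X and Y in the polar Grassmann graph Γ_k(n) equals |X| − |X ∩ Y|; if every element of X \ Y is non-collinear to some element of Y (and X ≠ Y), then the distance equals |X| − |X ∩ Y| + 1. -/
open Finset

/-- The point set J = {±1, …, ±n} of the thin polar space Π_n. -/
noncomputable def polarJ (n : ℕ) : Finset ℤ := (Finset.Icc (-(n : ℤ)) (n : ℤ)).erase 0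

/-- A subset of J is singular iff it contains no pair {i, -i}. -/
def Sing (n : ℕ) (S : Finset ℤ) : Prop := S ⊆ polarJ n ∧ ∀ i ∈ S, -i ∉ S

/-- Vertices of the polar Grassmann graph Γ_k(n): (k+1)-element singular subsets. -/
def Vert (n k : ℕ) := {S : Finset ℤ // Sing n S ∧ S.card = k + 1}

/-- The polar Grassmann graph Γ_k(n). -/
def Gr (n k : ℕ) : SimpleGraph (Vert n k) :=
  SimpleGraph.fromRel fun X Y => (X.1 ∩ Y.1).card = k ∧ Sing n (X.1 ∪ Y.1)

namespace Gr4aux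

variable {n k : ℕ}

lemma sing_mono {S T : Finset ℤ} (h : Sing n S) (hTS : T ⊆ S) : Sing n T :=
  ⟨hTS.trans h.1, fun i hi hni => h.2 i (hTS hi) (hTS hni)⟩

lemma adj_iff {X Y : Vert n k} :
    (Gr n k).Adj X Y ↔ X ≠ Y ∧ (X.1 ∩ Y.1).card = k ∧ Sing n (X.1 ∪ Y.1) := by
  constructor
  · rintro ⟨hne, h | h⟩
    · exact ⟨hne, h⟩
    · exact ⟨hne, by rw [inter_comm]; exact h.1, by rw [union_comm]; exact h.2⟩
  · rintro ⟨hne, h⟩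
    exact ⟨hne, Or.inl h⟩

lemma vert_eq_of_subset {X Y : Vert n k} (h : X.1 ⊆ Y.1) : X = Y :=
  Subtype.ext (Finset.eq_of_subset_of_card_le h (by rw [X.2.2, Y.2.2]))

/-- Lower bound: any walk from X to Y has length at least |X \ Y|. -/
lemma lb {X Y : Vert n k} (p : (Gr n k).Walk X Y) : (X.1 \ Y.1).card ≤ p.length := by
  induction p with
  | nil => simp
  | cons h p ih =>
    rename_i X Z Y
    rw [adj_iff] at h
    have hc := X.2.2
    have hic := Finset.card_inter_add_card_sdiff X.1 Z.1
    have h1 : (X.1 \ Z.1).card = 1 := by omega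
    have hsub : X.1 \ Y.1 ⊆ (Z.1 \ Y.1) ∪ (X.1 \ Z.1) := by
      intro a ha
      simp only [mem_sdiff, mem_union] at *
      by_cases haZ : a ∈ Z.1 <;> tauto
    have := card_le_card hsub
    have := card_union_le (Z.1 \ Y.1) (X.1 \ Z.1)
    simp only [SimpleGraph.Walk.length_cons]
    omega

/-- In the "type B" situation, negation maps Y \ X into X \ Y. -/
lemma neg_image {X Y : Vert n k} (hB : ∀ i ∈ X.1 \ Y.1, -i ∈ Y.1) :
    ∀ a ∈ Y.1 \ X.1, -a ∈ X.1 \ Y.1 := by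
  have hTsub : (X.1 \ Y.1).image (fun i => -i) ⊆ Y.1 \ X.1 := by
    intro a ha
    simp only [mem_image] at ha
    obtain ⟨i, hi, rfl⟩ := ha
    have hiX := (mem_sdiff.mp hi).1
    exact mem_sdiff.mpr ⟨hB i hi, X.2.1.2 i hiX⟩
  have hcard : ((X.1 \ Y.1).image (fun i => -i)).card = (Y.1 \ X.1).card := by
    rw [Finset.card_image_of_injOn (fun a _ b _ h => by simpa using h),
      Finset.card_sdiff_comm (by rw [X.2.2, Y.2.2])]
  have hT : (X.1 \ Y.1).image (fun i => -i) = Y.1 \ X.1 :=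
    Finset.eq_of_subset_of_card_le hTsub (le_of_eq hcard.symm)
  intro a ha
  rw [← hT] at ha
  simp only [mem_image] at ha
  obtain ⟨i, hi, rfl⟩ := ha
  simpa using hi

/-- If some i ∈ X \ Y is collinear to all of Y, then there is y ∈ Y \ X with -y ∉ X. -/
lemma exists_good {X Y : Vert n k} {i : ℤ} (hi : i ∈ X.1) (hiY : i ∉ Y.1)
    (hniY : -i ∉ Y.1) : ∃ y ∈ Y.1, y ∉ X.1 ∧ -y ∉ X.1 := by
  by_contra hcon
  push_neg at hcon
  have hTsub : (Y.1 \ X.1).image (fun a => -a) ⊆ X.1 \ Y.1 := by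
    intro a ha
    simp only [mem_image] at ha
    obtain ⟨y, hy, rfl⟩ := ha
    obtain ⟨hyY, hyX⟩ := mem_sdiff.mp hy
    exact mem_sdiff.mpr ⟨hcon y hyY hyX, Y.2.1.2 y hyY⟩
  have hcard : ((Y.1 \ X.1).image (fun a => -a)).card = (X.1 \ Y.1).card := by
    rw [Finset.card_image_of_injOn (fun a _ b _ h => by simpa using h),
      Finset.card_sdiff_comm (by rw [X.2.2, Y.2.2])]
  have hT : (Y.1 \ X.1).image (fun a => -a) = X.1 \ Y.1 :=
    Finset.eq_of_subset_of_card_le hTsub (le_of_eq hcard.symm)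
  have : i ∈ (Y.1 \ X.1).image (fun a => -a) := hT ▸ mem_sdiff.mpr ⟨hi, hiY⟩
  simp only [mem_image] at this
  obtain ⟨y, hy, hyi⟩ := this
  exact hniY (by rw [← hyi, neg_neg]; exact (mem_sdiff.mp hy).1)

/-- One-step exchange: replace x ∈ X by a fresh point w. -/
lemma step (X : Vert n k) {x w : ℤ} (hx : x ∈ X.1) (hw : w ∈ polarJ n)
    (hwX : w ∉ X.1) (hnw : -w ∉ X.1) :
    ∃ Z : Vert n k, Z.1 = insert w (X.1.erase x) ∧ (Gr n k).Adj X Z := by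
  have hw0 : w ≠ 0 := by
    have := (Finset.mem_erase.mp hw).1; exact this
  have hsingU : Sing n (insert w X.1) := by
    refine ⟨?_, ?_⟩
    · intro a ha
      rcases Finset.mem_insert.mp ha with rfl | ha
      · exact hw
      · exact X.2.1.1 ha
    · intro a ha hna
      rcases Finset.mem_insert.mp ha with rfl | ha
      · rcases Finset.mem_insert.mp hna with h | h
        · omega
        · exact hnw h
      · rcases Finset.mem_insert.mp hna with h | h
        · exact hnw (by rw [← h, neg_neg]; exact ha)
        · exact X.2.1.2 a ha h
  have hZsub : insert w (X.1.erase x) ⊆ insert w X.1 := by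
    intro a ha
    rcases Finset.mem_insert.mp ha with rfl | ha
    · exact Finset.mem_insert_self _ _
    · exact Finset.mem_insert_of_mem (Finset.mem_of_mem_erase ha)
  have hcard : (insert w (X.1.erase x)).card = k + 1 := by
    rw [Finset.card_insert_of_notMem (fun hmem => hwX (Finset.mem_of_mem_erase hmem)),
      Finset.card_erase_of_mem hx, X.2.2]
    omega
  refine ⟨⟨insert w (X.1.erase x), sing_mono hsingU hZsub, hcard⟩, rfl, ?_⟩
  refine adj_iff.mpr ?_
  refine ⟨?_, ?_, ?_⟩
  · intro hEq
    have : w ∈ X.1 := by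
      rw [hEq]; exact Finset.mem_insert_self _ _
    exact hwX this
  · have : X.1 ∩ insert w (X.1.erase x) = X.1.erase x := by
      ext a
      simp only [mem_inter, mem_insert, mem_erase]
      constructor
      · rintro ⟨haX, rfl | ⟨hax, _⟩⟩
        · exact absurd haX hwX
        · exact ⟨hax, haX⟩
      · rintro ⟨hax, haX⟩
        exact ⟨haX, Or.inr ⟨hax, haX⟩⟩
    rw [this, Finset.card_erase_of_mem hx, X.2.2]
    omega
  · have : X.1 ∪ insert w (X.1.erase x) = insert w X.1 := by
      ext a
      simp only [mem_union, mem_insert, mem_erase]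
      constructor
      · rintro (h | h | h) <;> tauto
      · rintro (rfl | h) <;> tauto
    rw [this]; exact hsingU

lemma sdiff_insert_erase {X Y : Finset ℤ} {x y : ℤ} (hyY : y ∈ Y) :
    insert y (X.erase x) \ Y = (X \ Y).erase x := by
  ext a
  simp only [mem_sdiff, mem_insert, mem_erase]
  constructor
  · rintro ⟨rfl | ⟨hax, haX⟩, haY⟩
    · exact absurd hyY haY
    · exact ⟨hax, haX, haY⟩
  · rintro ⟨hax, haX, haY⟩
    exact ⟨Or.inr ⟨hax, haX⟩, haY⟩

/-- Upper bound in case A (or X = Y): a walk of length ≤ m exists. -/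
lemma ubA : ∀ m : ℕ, ∀ X Y : Vert n k, (X.1 \ Y.1).card ≤ m →
    (X = Y ∨ ∃ i ∈ X.1 \ Y.1, -i ∉ Y.1) →
    ∃ p : (Gr n k).Walk X Y, p.length ≤ m := by
  intro m
  induction m with
  | zero =>
    intro X Y hcard _
    have hsub : X.1 ⊆ Y.1 := by
      rw [← sdiff_eq_empty_iff_subset]
      exact card_eq_zero.mp (Nat.le_zero.mp hcard)
    obtain rfl := vert_eq_of_subset hsub
    exact ⟨.nil, by simp⟩
  | succ m ih =>
    intro X Y hcard hyp
    rcases hyp with rfl | ⟨i, hiXY, hniY⟩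
    · exact ⟨.nil, by simp⟩
    have hiXY' := mem_sdiff.mp hiXY
    obtain ⟨y, hyY, hyX, hnyX⟩ := exists_good hiXY'.1 hiXY'.2 hniY
    by_cases hcase : ((X.1 \ Y.1).erase i).Nonempty
    · obtain ⟨x, hx⟩ := hcase
      have hxXY : x ∈ X.1 \ Y.1 := mem_of_mem_erase hx
      obtain ⟨Z, hZ, hadj⟩ := step X (mem_sdiff.mp hxXY).1 (Y.2.1.1 hyY) hyX hnyX
      have hZY : Z.1 \ Y.1 = (X.1 \ Y.1).erase x := by
        rw [hZ]; exact sdiff_insert_erase hyY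
      have hc1 : 1 ≤ (X.1 \ Y.1).card := card_pos.mpr ⟨x, hxXY⟩
      have hcZ : (Z.1 \ Y.1).card ≤ m := by
        rw [hZY, Finset.card_erase_of_mem hxXY]; omega
      have hiZ : i ∈ Z.1 \ Y.1 := by
        rw [hZY]
        exact mem_erase.mpr ⟨(ne_of_mem_erase hx).symm, hiXY⟩
      obtain ⟨q, hq⟩ := ih Z Y hcZ (Or.inr ⟨i, hiZ, hniY⟩)
      exact ⟨.cons hadj q, by simpa using Nat.succ_le_succ hq⟩
    · obtain ⟨Z, hZ, hadj⟩ := step X hiXY'.1 (Y.2.1.1 hyY) hyX hnyX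
      have hZY : Z.1 \ Y.1 = (X.1 \ Y.1).erase i := by
        rw [hZ]; exact sdiff_insert_erase hyY
      have hZY0 : Z.1 \ Y.1 = ∅ := by
        rw [hZY]
        exact not_nonempty_iff_eq_empty.mp hcase
      have : Z = Y := vert_eq_of_subset (sdiff_eq_empty_iff_subset.mp hZY0)
      subst this
      exact ⟨.cons hadj .nil, by simp⟩

/-- In case B there exists a completely fresh point w. -/
lemma fresh (hk : k + 1 ≤ n - 1) (X Y : Vert n k)
    (hB : ∀ i ∈ X.1 \ Y.1, -i ∈ Y.1) :
    ∃ w : ℤ, w ∈ polarJ n ∧ w ∉ X.1 ∧ -w ∉ X.1 ∧ w ∉ Y.1 ∧ -w ∉ Y.1 := by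
  have hYX := neg_image (X := X) (Y := Y) hB
  set A : Finset ℕ := (X.1 ∪ Y.1).image Int.natAbs with hA
  have hAX : A ⊆ X.1.image Int.natAbs := by
    intro b hb
    simp only [hA, mem_image, mem_union] at hb ⊢
    obtain ⟨a, ha, rfl⟩ := hb
    rcases ha with ha | ha
    · exact ⟨a, ha, rfl⟩
    · by_cases haX : a ∈ X.1
      · exact ⟨a, haX, rfl⟩
      · have := hYX a (mem_sdiff.mpr ⟨ha, haX⟩)
        exact ⟨-a, (mem_sdiff.mp this).1, Int.natAbs_neg a⟩
  have hcardA : A.card < n := by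
    have h1 : A.card ≤ (X.1.image Int.natAbs).card := card_le_card hAX
    have h2 : (X.1.image Int.natAbs).card ≤ X.1.card := card_image_le
    have h3 := X.2.2
    omega
  have hne : (Finset.Icc 1 n \ A).Nonempty := by
    rw [← card_pos]
    have := Finset.le_card_sdiff A (Finset.Icc 1 n)
    rw [Nat.card_Icc] at this
    omega
  obtain ⟨b, hb⟩ := hne
  obtain ⟨hbI, hbA⟩ := mem_sdiff.mp hb
  rw [Finset.mem_Icc] at hbI
  have key : ∀ a : ℤ, a.natAbs = b → a ∉ X.1 ∪ Y.1 := by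
    intro a hab hmem
    exact hbA (by rw [hA]; exact mem_image.mpr ⟨a, hmem, hab⟩)
  have hwJ : (b : ℤ) ∈ polarJ n := by
    rw [polarJ, Finset.mem_erase, Finset.mem_Icc]
    constructor
    · exact_mod_cast Nat.one_le_iff_ne_zero.mp hbI.1
    · constructor
      · have : (0 : ℤ) ≤ (b : ℤ) := Int.natCast_nonneg b
        have : (0 : ℤ) ≤ (n : ℤ) := Int.natCast_nonneg n
        omega
      · exact_mod_cast hbI.2
  have h1 := key (b : ℤ) (Int.natAbs_natCast b)
  have h2 := key (-(b : ℤ)) (by simp)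
  rw [Finset.mem_union] at h1 h2
  push_neg at h1 h2
  exact ⟨(b : ℤ), hwJ, h1.1, h2.1, h1.2, h2.2⟩

/-- Lower bound in case B. -/
lemma lbB {X Y : Vert n k} (hne : X ≠ Y) (hB : ∀ i ∈ X.1 \ Y.1, -i ∈ Y.1)
    (p : (Gr n k).Walk X Y) : (X.1 \ Y.1).card + 1 ≤ p.length := by
  cases p with
  | nil => exact absurd rfl hne
  | cons h q =>
    rename_i Z
    rw [adj_iff] at h
    have hcX := X.2.2
    have hcZ := Z.2.2
    have hic := Finset.card_inter_add_card_sdiff X.1 Z.1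
    have hic' := Finset.card_inter_add_card_sdiff Z.1 X.1
    have h1 : (X.1 \ Z.1).card = 1 := by omega
    have h2 : (Z.1 \ X.1).card = 1 := by
      rw [inter_comm] at hic'; omega
    obtain ⟨x, hx⟩ := card_eq_one.mp h1
    obtain ⟨w, hw⟩ := card_eq_one.mp h2
    have hwZX : w ∈ Z.1 \ X.1 := by rw [hw]; exact mem_singleton_self w
    have hwZ : w ∈ Z.1 := (mem_sdiff.mp hwZX).1
    have hwX : w ∉ X.1 := (mem_sdiff.mp hwZX).2
    have hwY : w ∉ Y.1 := by
      intro hwY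
      have hnw : -w ∈ X.1 \ Y.1 := neg_image hB w (mem_sdiff.mpr ⟨hwY, hwX⟩)
      exact h.2.2.2 w (Finset.mem_union_right _ hwZ)
        (Finset.mem_union_left _ (mem_sdiff.mp hnw).1)
    have hsub : insert w ((X.1 \ Y.1).erase x) ⊆ Z.1 \ Y.1 := by
      intro a ha
      rcases Finset.mem_insert.mp ha with rfl | ha
      · exact mem_sdiff.mpr ⟨hwZ, hwY⟩
      · obtain ⟨hax, haXY⟩ := mem_erase.mp ha
        obtain ⟨haX, haY⟩ := mem_sdiff.mp haXY
        have haZ : a ∈ Z.1 := by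
          by_contra haZ
          have : a ∈ X.1 \ Z.1 := mem_sdiff.mpr ⟨haX, haZ⟩
          rw [hx, mem_singleton] at this
          exact hax this
        exact mem_sdiff.mpr ⟨haZ, haY⟩
    have hnm : 1 ≤ (X.1 \ Y.1).card := by
      rw [Nat.one_le_iff_ne_zero]
      intro h0
      exact hne (vert_eq_of_subset (sdiff_eq_empty_iff_subset.mp (card_eq_zero.mp h0)))
    have hcardins : (insert w ((X.1 \ Y.1).erase x)).card
        = ((X.1 \ Y.1).erase x).card + 1 :=
      Finset.card_insert_of_notMem
        (fun hmem => hwX (mem_sdiff.mp (mem_of_mem_erase hmem)).1)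
    have herase : (X.1 \ Y.1).card - 1 ≤ ((X.1 \ Y.1).erase x).card :=
      Finset.pred_card_le_card_erase
    have hle : (X.1 \ Y.1).card ≤ (Z.1 \ Y.1).card := by
      have := card_le_card hsub
      omega
    have := lb q
    simp only [SimpleGraph.Walk.length_cons]
    omega

end Gr4aux

/-- Distance formula in Γ_k(n): if some element of X \ Y is collinear to all of Y then
d(X,Y) = |X| - |X ∩ Y|; if X ≠ Y and every element of X \ Y is non-collinear to some
element of Y then d(X,Y) = |X| - |X ∩ Y| + 1. -/
theorem stmt4 (n k : ℕ) (hk : k + 1 ≤ n - 1) (X Y : Vert n k) :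
    ((∃ i ∈ X.1 \ Y.1, -i ∉ Y.1) →
      (Gr n k).dist X Y = X.1.card - (X.1 ∩ Y.1).card) ∧
    ((X ≠ Y ∧ ∀ i ∈ X.1 \ Y.1, -i ∈ Y.1) →
      (Gr n k).dist X Y = X.1.card - (X.1 ∩ Y.1).card + 1) := by
  have hXY := Finset.card_inter_add_card_sdiff X.1 Y.1
  constructor
  · rintro ⟨i, hi, hni⟩
    obtain ⟨p, hp⟩ := Gr4aux.ubA (X.1 \ Y.1).card X Y le_rfl (Or.inr ⟨i, hi, hni⟩)
    have hub : (Gr n k).dist X Y ≤ (X.1 \ Y.1).card :=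
      le_trans (SimpleGraph.dist_le p) hp
    have hreach : (Gr n k).Reachable X Y := ⟨p⟩
    obtain ⟨q, hq⟩ := hreach.exists_walk_length_eq_dist
    have hlb := Gr4aux.lb q
    omega
  · rintro ⟨hne, hB⟩
    obtain ⟨w, hwJ, hwX, hnwX, hwY, hnwY⟩ := Gr4aux.fresh hk X Y hB
    have hm1 : (X.1 \ Y.1).Nonempty := by
      rw [Finset.nonempty_iff_ne_empty]
      intro h0
      exact hne (Gr4aux.vert_eq_of_subset (Finset.sdiff_eq_empty_iff_subset.mp h0))
    obtain ⟨x, hx⟩ := hm1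
    obtain ⟨Z, hZ, hadj⟩ := Gr4aux.step X (Finset.mem_sdiff.mp hx).1 hwJ hwX hnwX
    have hZY : Z.1 \ Y.1 = insert w ((X.1 \ Y.1).erase x) := by
      rw [hZ]
      ext a
      simp only [Finset.mem_sdiff, Finset.mem_insert, Finset.mem_erase]
      constructor
      · rintro ⟨rfl | ⟨hax, haX⟩, haY⟩
        · exact Or.inl rfl
        · exact Or.inr ⟨hax, haX, haY⟩
      · rintro (rfl | ⟨hax, haX, haY⟩)
        · exact ⟨Or.inl rfl, hwY⟩
        · exact ⟨Or.inr ⟨hax, haX⟩, haY⟩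
    have hcZ : (Z.1 \ Y.1).card ≤ (X.1 \ Y.1).card := by
      rw [hZY, Finset.card_insert_of_notMem
        (fun hmem => hwX (Finset.mem_sdiff.mp (Finset.mem_of_mem_erase hmem)).1),
        Finset.card_erase_of_mem hx]
      have : 1 ≤ (X.1 \ Y.1).card := Finset.card_pos.mpr ⟨x, hx⟩
      omega
    have hwZY : w ∈ Z.1 \ Y.1 := by
      rw [hZY]; exact Finset.mem_insert_self _ _
    obtain ⟨q, hq⟩ := Gr4aux.ubA (X.1 \ Y.1).card Z Y hcZ (Or.inr ⟨w, hwZY, hnwY⟩)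
    have hub : (Gr n k).dist X Y ≤ (X.1 \ Y.1).card + 1 := by
      have := SimpleGraph.dist_le (SimpleGraph.Walk.cons hadj q)
      simp only [SimpleGraph.Walk.length_cons] at this
      omega
    have hreach : (Gr n k).Reachable X Y := ⟨.cons hadj q⟩
    obtain ⟨q', hq'⟩ := hreach.exists_walk_length_eq_dist
    have hlb := Gr4aux.lbB hne hB q'
    omega
end

section
/- For k ≤ n−2, the diameter of the polar Grassmann graph Γ_k(n) of the thin polar space Π_n is exactly k+2. -/
open Finset

def negF (S : Finset ℤ) : Finset ℤ := S.image (fun x => -x)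

lemma mem_negF {a : ℤ} {S : Finset ℤ} : a ∈ negF S ↔ -a ∈ S := by
  simp [negF, eq_comm, neg_eq_iff_eq_neg]
  constructor
  · rintro ⟨x, hx, rfl⟩; simpa
  · intro h; exact ⟨-a, h, by ring⟩

lemma adj_iff {n k : ℕ} {X Y : Vert n k} :
    (Gr n k).Adj X Y ↔ X ≠ Y ∧ (X.1 ∩ Y.1).card = k ∧ Sing n (X.1 ∪ Y.1) := by
  rw [Gr, SimpleGraph.fromRel_adj]
  constructor
  · rintro ⟨hne, h | h⟩
    · exact ⟨hne, h⟩
    · exact ⟨hne, by rw [inter_comm]; exact h.1, by rw [union_comm]; exact h.2⟩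
  · rintro ⟨hne, h⟩; exact ⟨hne, Or.inl h⟩

lemma adj_swap {n k : ℕ} (X : Vert n k) (x z : ℤ) (hx : x ∈ X.1) (hz : z ∈ polarJ n)
    (hzX : z ∉ X.1) (hznX : -z ∉ X.1) :
    ∃ X' : Vert n k, (Gr n k).Adj X X' ∧ X'.1 = insert z (X.1.erase x) := by
  obtain ⟨⟨hsub, hsing⟩, hcard⟩ := X.2
  have hz0 : z ≠ 0 := by simp [polarJ] at hz; exact hz.1
  have hzz : -z ≠ z := by omega
  have hSing' : Sing n (insert z (X.1.erase x)) := by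
    constructor
    · intro i hi
      rcases mem_insert.1 hi with rfl | hi
      · exact hz
      · exact hsub (mem_of_mem_erase hi)
    · intro i hi hni
      rcases mem_insert.1 hi with rfl | hi
      · rcases mem_insert.1 hni with h | h
        · exact hzz h
        · exact hznX (mem_of_mem_erase h)
      · have hiX : i ∈ X.1 := mem_of_mem_erase hi
        rcases mem_insert.1 hni with h | h
        · exact hznX (by rw [← h]; simpa using hiX)
        · exact hsing i hiX (mem_of_mem_erase h)
  have hcard' : (insert z (X.1.erase x)).card = k + 1 := by
    rw [card_insert_of_notMem (fun h => hzX (mem_of_mem_erase h)),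
      card_erase_of_mem hx, hcard]
    omega
  refine ⟨⟨insert z (X.1.erase x), hSing', hcard'⟩, ?_, rfl⟩
  apply adj_iff.2
  refine ⟨?_, ?_, ?_⟩
  · intro h
    apply hzX
    have : z ∈ insert z (X.1.erase x) := mem_insert_self _ _
    have h2 : X.1 = insert z (X.1.erase x) := Subtype.ext_iff.1 h
    rw [h2]; exact this
  · have : X.1 ∩ insert z (X.1.erase x) = X.1.erase x := by
      ext i
      simp only [mem_inter, mem_insert, mem_erase]
      constructor
      · rintro ⟨hiX, rfl | hi⟩
        · exact absurd hiX hzX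
        · exact hi
      · rintro ⟨hne, hiX⟩; exact ⟨hiX, Or.inr ⟨hne, hiX⟩⟩
    rw [this, card_erase_of_mem hx, hcard]; omega
  · have : X.1 ∪ insert z (X.1.erase x) = insert z X.1 := by
      ext i
      simp only [mem_union, mem_insert, mem_erase]
      constructor
      · rintro (h | rfl | ⟨_, h⟩)
        · exact Or.inr h
        · exact Or.inl rfl
        · exact Or.inr h
      · rintro (rfl | h)
        · exact Or.inr (Or.inl rfl)
        · by_cases hix : i = x
          · subst hix; exact Or.inl h
          · exact Or.inr (Or.inr ⟨hix, h⟩)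
    rw [this]
    constructor
    · intro i hi
      rcases mem_insert.1 hi with rfl | hi
      · exact hz
      · exact hsub hi
    · intro i hi hni
      rcases mem_insert.1 hi with rfl | hi
      · rcases mem_insert.1 hni with h | h
        · exact hzz h
        · exact hznX h
      · rcases mem_insert.1 hni with h | h
        · exact hznX (by rw [← h]; simpa using hi)
        · exact hsing i hi h

lemma vert_ne_nonempty {n k : ℕ} {X Y : Vert n k} (h : X.1 ≠ Y.1) :
    (X.1 \ Y.1).Nonempty := by
  rw [Finset.sdiff_nonempty]
  intro hsub
  exact h (Finset.eq_of_subset_of_card_le hsub (by rw [X.2.2, Y.2.2]))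

lemma swap_sdiff {X Y : Finset ℤ} {x y : ℤ} (hy : y ∈ Y) :
    insert y (X.erase x) \ Y = (X \ Y).erase x := by
  ext i
  simp only [mem_sdiff, mem_insert, mem_erase]
  constructor
  · rintro ⟨rfl | ⟨hne, hiX⟩, hiY⟩
    · exact absurd hy hiY
    · exact ⟨hne, hiX, hiY⟩
  · rintro ⟨hne, hiX, hiY⟩
    exact ⟨Or.inr ⟨hne, hiX⟩, hiY⟩

lemma swap_inter_negF {X Y : Finset ℤ} {x y : ℤ} (hy : y ∈ Y) (hsing : ∀ i ∈ Y, -i ∉ Y) :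
    insert y (X.erase x) ∩ negF Y = (X ∩ negF Y).erase x := by
  ext i
  simp only [mem_inter, mem_insert, mem_erase]
  constructor
  · rintro ⟨hiy, hiN⟩
    rcases hiy with rfl | ⟨hne, hiX⟩
    · exact absurd (mem_negF.1 hiN) (hsing _ hy)
    · exact ⟨hne, hiX, hiN⟩
  · rintro ⟨hne, hiX, hiN⟩
    exact ⟨Or.inr ⟨hne, hiX⟩, hiN⟩

lemma walkA {n k : ℕ} : ∀ d : ℕ, ∀ X Y : Vert n k,
    (X.1 \ Y.1).card ≤ d →
    ((X.1 ∩ negF Y.1).card < (X.1 \ Y.1).card ∨ X.1 = Y.1) →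
    ∃ w : (Gr n k).Walk X Y, w.length ≤ d := by
  intro d
  induction d with
  | zero =>
    intro X Y hd hc
    rcases hc with hc | hc
    · omega
    · obtain rfl : X = Y := Subtype.ext hc
      exact ⟨SimpleGraph.Walk.nil, by simp⟩
  | succ d ih =>
    intro X Y hd hc
    rcases eq_or_ne X.1 Y.1 with heq | hne
    · obtain rfl : X = Y := Subtype.ext heq
      exact ⟨SimpleGraph.Walk.nil, by simp⟩
    have hc' : (X.1 ∩ negF Y.1).card < (X.1 \ Y.1).card := hc.resolve_right hne
    have hYsing := Y.2.1.2
    have hYsub := Y.2.1.1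
    have hXsing := X.2.1.2
    have hcards : (Y.1 \ X.1).card = (X.1 \ Y.1).card :=
      card_sdiff_comm (by rw [X.2.2, Y.2.2])
    have hd0 : 1 ≤ (X.1 \ Y.1).card := card_pos.2 (vert_ne_nonempty hne)
    have step : ∀ x y : ℤ, x ∈ X.1 → x ∉ Y.1 → y ∈ Y.1 → y ∉ X.1 → -y ∉ X.1 →
        (insert y (X.1.erase x) ≠ Y.1 →
          ((X.1 ∩ negF Y.1).erase x).card < (X.1 \ Y.1).card - 1) →
        ∃ w : (Gr n k).Walk X Y, w.length ≤ d + 1 := by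
      intro x y hxX hxY hyY hyX hnyX hq
      obtain ⟨X', hadj, hX'⟩ := adj_swap X x y hxX (hYsub hyY) hyX hnyX
      have hsd : X'.1 \ Y.1 = (X.1 \ Y.1).erase x := by rw [hX']; exact swap_sdiff hyY
      have hcard_sd : (X'.1 \ Y.1).card = (X.1 \ Y.1).card - 1 := by
        rw [hsd, card_erase_of_mem (mem_sdiff.2 ⟨hxX, hxY⟩)]
      have hint : X'.1 ∩ negF Y.1 = (X.1 ∩ negF Y.1).erase x := by
        rw [hX']; exact swap_inter_negF hyY hYsing
      obtain ⟨w', hw'⟩ := ih X' Y (by omega) (by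
        rcases eq_or_ne X'.1 Y.1 with h | h
        · exact Or.inr h
        · left
          rw [hint, hcard_sd]
          exact hq (by rw [← hX']; exact h))
      exact ⟨SimpleGraph.Walk.cons hadj w', by simpa using Nat.succ_le_succ hw'⟩
    rcases (X.1 ∩ negF Y.1).eq_empty_or_nonempty with hE | ⟨x, hxmem⟩
    · -- no conflicts
      obtain ⟨x, hx⟩ := vert_ne_nonempty hne
      obtain ⟨hxX, hxY⟩ := mem_sdiff.1 hx
      have hYXne : (Y.1 \ X.1).Nonempty := by rw [← card_pos, hcards]; omega
      obtain ⟨y, hy⟩ := hYXne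
      obtain ⟨hyY, hyX⟩ := mem_sdiff.1 hy
      have hnyX : -y ∉ X.1 := by
        intro h
        have : -y ∈ X.1 ∩ negF Y.1 := mem_inter.2 ⟨h, mem_negF.2 (by simpa using hyY)⟩
        rw [hE] at this; exact absurd this (notMem_empty _)
      refine step x y hxX hxY hyY hyX hnyX ?_
      intro hne'
      rw [hE]
      simp only [erase_empty, card_empty]
      -- need (X \ Y).card ≥ 2
      rcases Nat.lt_or_ge 1 ((X.1 \ Y.1).card) with h2 | h2
      · omega
      · exfalso
        apply hne'
        have hXY : X.1 \ Y.1 = {x} := by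
          apply Finset.eq_singleton_iff_unique_mem.2
          refine ⟨hx, fun a ha => ?_⟩
          by_contra hax
          have : 2 ≤ (X.1 \ Y.1).card := by
            have : ({a, x} : Finset ℤ) ⊆ X.1 \ Y.1 := by
              intro i hi
              rcases mem_insert.1 hi with rfl | hi
              · exact ha
              · rw [mem_singleton.1 hi]; exact hx
            calc 2 = ({a, x} : Finset ℤ).card := by rw [card_insert_of_notMem (by simpa using hax), card_singleton]
            _ ≤ _ := card_le_card this
          omega
        have hsub : insert y (X.1.erase x) ⊆ Y.1 := by
          intro i hi
          rcases mem_insert.1 hi with rfl | hi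
          · exact hyY
          · obtain ⟨hix, hiX⟩ := mem_erase.1 hi
            by_contra hiY
            have : i ∈ X.1 \ Y.1 := mem_sdiff.2 ⟨hiX, hiY⟩
            rw [hXY] at this
            exact hix (mem_singleton.1 this)
        apply Finset.eq_of_subset_of_card_le hsub
        rw [Y.2.2, card_insert_of_notMem (fun h => hyX (mem_of_mem_erase h)),
          card_erase_of_mem hxX, X.2.2]
        omega
    · -- there is a conflict x
      obtain ⟨hxX, hxN⟩ := mem_inter.1 hxmem
      have hnxY : -x ∈ Y.1 := mem_negF.1 hxN
      have hxY : x ∉ Y.1 := fun h => hYsing x h hnxY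
      have himg : Finset.image (fun a => -a) ((Y.1 \ X.1) ∩ negF X.1) = X.1 ∩ negF Y.1 := by
        ext i
        simp only [mem_image, mem_inter, mem_sdiff, mem_negF]
        constructor
        · rintro ⟨a, ⟨⟨haY, haX⟩, haN⟩, rfl⟩
          exact ⟨haN, by simpa using haY⟩
        · rintro ⟨hiX, hniY⟩
          exact ⟨-i, ⟨⟨hniY, hXsing i hiX⟩, by simpa using hiX⟩, by simp⟩
      have hcc : ((Y.1 \ X.1) ∩ negF X.1).card = (X.1 ∩ negF Y.1).card := by
        rw [← himg, card_image_of_injective _ neg_injective]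
      have hyne : ((Y.1 \ X.1) \ negF X.1).Nonempty := by
        rw [Finset.sdiff_nonempty]
        intro hsub
        rw [inter_eq_left.2 hsub, hcards] at hcc
        omega
      obtain ⟨y, hy⟩ := hyne
      obtain ⟨hy1, hyN⟩ := mem_sdiff.1 hy
      obtain ⟨hyY, hyX⟩ := mem_sdiff.1 hy1
      have hnyX : -y ∉ X.1 := fun h => hyN (mem_negF.2 h)
      refine step x y hxX hxY hyY hyX hnyX ?_
      intro _
      rw [card_erase_of_mem hxmem]
      have hcpos : 1 ≤ (X.1 ∩ negF Y.1).card := card_pos.2 ⟨x, hxmem⟩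
      omega


lemma walkUB {n k : ℕ} (hk : k + 2 ≤ n) (X Y : Vert n k) :
    ∃ w : (Gr n k).Walk X Y, w.length ≤ k + 2 := by
  have hXsing := X.2.1.2
  have hYsing := Y.2.1.2
  have hcards : (Y.1 \ X.1).card = (X.1 \ Y.1).card :=
    card_sdiff_comm (by rw [X.2.2, Y.2.2])
  have hdle : (X.1 \ Y.1).card ≤ k + 1 := by
    calc (X.1 \ Y.1).card ≤ X.1.card := card_le_card sdiff_subset
    _ = k + 1 := X.2.2
  have himg : Finset.image (fun a => -a) ((Y.1 \ X.1) ∩ negF X.1) = X.1 ∩ negF Y.1 := by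
    ext i
    simp only [mem_image, mem_inter, mem_sdiff, mem_negF]
    constructor
    · rintro ⟨a, ⟨⟨haY, haX⟩, haN⟩, rfl⟩
      exact ⟨haN, by simpa using haY⟩
    · rintro ⟨hiX, hniY⟩
      exact ⟨-i, ⟨⟨hniY, hXsing i hiX⟩, by simpa using hiX⟩, by simp⟩
  have hcc : ((Y.1 \ X.1) ∩ negF X.1).card = (X.1 ∩ negF Y.1).card := by
    rw [← himg, card_image_of_injective _ neg_injective]
  have hcled : (X.1 ∩ negF Y.1).card ≤ (X.1 \ Y.1).card := by
    rw [← hcc, ← hcards]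
    exact card_le_card inter_subset_left
  rcases eq_or_ne X.1 Y.1 with heq | hne
  · obtain ⟨w, hw⟩ := walkA (k + 2) X Y (by omega) (Or.inr heq)
    exact ⟨w, hw⟩
  rcases Nat.lt_or_ge (X.1 ∩ negF Y.1).card (X.1 \ Y.1).card with hlt | hge
  · obtain ⟨w, hw⟩ := walkA (k + 2) X Y (by omega) (Or.inl hlt)
    exact ⟨w, hw⟩
  -- c = d0 ≥ 1 : need a fresh element
  have hd0 : 1 ≤ (X.1 \ Y.1).card := card_pos.2 (vert_ne_nonempty hne)
  have hceq : (X.1 ∩ negF Y.1).card = (X.1 \ Y.1).card := le_antisymm hcled hge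
  have hYsub2 : Y.1 ⊆ X.1 ∪ negF X.1 := by
    have hIeq : (Y.1 \ X.1) ∩ negF X.1 = Y.1 \ X.1 :=
      Finset.eq_of_subset_of_card_le inter_subset_left (by omega)
    intro y hy
    by_cases hyX : y ∈ X.1
    · exact mem_union_left _ hyX
    · have : y ∈ (Y.1 \ X.1) ∩ negF X.1 := by
        rw [hIeq]; exact mem_sdiff.2 ⟨hy, hyX⟩
      exact mem_union_right _ (mem_inter.1 this).2
  -- fresh natAbs value
  set T : Finset ℕ := (X.1 ∪ Y.1).image Int.natAbs with hT
  have hTsub : T ⊆ X.1.image Int.natAbs := by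
    intro a ha
    obtain ⟨w, hw, rfl⟩ := mem_image.1 ha
    rcases mem_union.1 hw with hw | hw
    · exact mem_image.2 ⟨w, hw, rfl⟩
    · rcases mem_union.1 (hYsub2 hw) with h | h
      · exact mem_image.2 ⟨w, h, rfl⟩
      · exact mem_image.2 ⟨-w, mem_negF.1 h, by simp⟩
  have hTcard : T.card ≤ k + 1 := by
    calc T.card ≤ (X.1.image Int.natAbs).card := card_le_card hTsub
    _ ≤ X.1.card := card_image_le
    _ = k + 1 := X.2.2
  have hnot : ¬ (Finset.Icc 1 n ⊆ T) := by
    intro h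
    have := card_le_card h
    rw [Nat.card_Icc] at this
    omega
  obtain ⟨a, haI, haT⟩ := Finset.not_subset.1 hnot
  obtain ⟨ha1, han⟩ := Finset.mem_Icc.1 haI
  have hnotmem : ∀ w : ℤ, w.natAbs = a → w ∉ X.1 ∪ Y.1 := by
    intro w hw hmem
    exact haT (mem_image.2 ⟨w, hmem, hw⟩)
  have hz : (a : ℤ) ∈ polarJ n := by
    simp only [polarJ, mem_erase, Finset.mem_Icc]
    refine ⟨by exact_mod_cast Nat.one_le_iff_ne_zero.1 ha1, ?_, by exact_mod_cast han⟩
    have : (0:ℤ) ≤ (a:ℤ) := Int.natCast_nonneg a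
    have : (0:ℤ) ≤ (n:ℤ) := Int.natCast_nonneg n
    omega
  have hzX : (a : ℤ) ∉ X.1 := fun h => hnotmem _ (by simp) (mem_union_left _ h)
  have hzY : (a : ℤ) ∉ Y.1 := fun h => hnotmem _ (by simp) (mem_union_right _ h)
  have hznX : -(a : ℤ) ∉ X.1 := fun h => hnotmem (-(a:ℤ)) (by simp) (mem_union_left _ h)
  have hznY : -(a : ℤ) ∉ Y.1 := fun h => hnotmem (-(a:ℤ)) (by simp) (mem_union_right _ h)
  -- pick a conflict x
  have hcpos : (X.1 ∩ negF Y.1).Nonempty := card_pos.1 (by omega)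
  obtain ⟨x, hxmem⟩ := hcpos
  obtain ⟨hxX, hxN⟩ := mem_inter.1 hxmem
  have hxY : x ∉ Y.1 := fun h => hYsing x h (mem_negF.1 hxN)
  obtain ⟨X', hadj, hX'⟩ := adj_swap X x (a : ℤ) hxX hz hzX hznX
  have hsd : X'.1 \ Y.1 = insert (a:ℤ) ((X.1 \ Y.1).erase x) := by
    rw [hX']
    ext i
    simp only [mem_sdiff, mem_insert, mem_erase]
    constructor
    · rintro ⟨rfl | ⟨hne', hiX⟩, hiY⟩
      · exact Or.inl rfl
      · exact Or.inr ⟨hne', hiX, hiY⟩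
    · rintro (rfl | ⟨hne', hiX, hiY⟩)
      · exact ⟨Or.inl rfl, hzY⟩
      · exact ⟨Or.inr ⟨hne', hiX⟩, hiY⟩
  have hsd_card : (X'.1 \ Y.1).card = (X.1 \ Y.1).card := by
    rw [hsd, card_insert_of_notMem (fun h => hzX (mem_sdiff.1 (mem_of_mem_erase h)).1),
      card_erase_of_mem (mem_sdiff.2 ⟨hxX, hxY⟩)]
    omega
  have hint : X'.1 ∩ negF Y.1 = (X.1 ∩ negF Y.1).erase x := by
    rw [hX']
    ext i
    simp only [mem_inter, mem_insert, mem_erase]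
    constructor
    · rintro ⟨hiy, hiN⟩
      rcases hiy with rfl | ⟨hne', hiX⟩
      · exact absurd (mem_negF.1 hiN) hznY
      · exact ⟨hne', hiX, hiN⟩
    · rintro ⟨hne', hiX, hiN⟩
      exact ⟨Or.inr ⟨hne', hiX⟩, hiN⟩
  obtain ⟨w', hw'⟩ := walkA (k + 1) X' Y (by omega) (by
    left
    rw [hint, hsd_card, card_erase_of_mem hxmem]
    omega)
  exact ⟨SimpleGraph.Walk.cons hadj w', by simpa using Nat.succ_le_succ hw'⟩

lemma adj_inter_card {n k : ℕ} {A B : Vert n k} (h : (Gr n k).Adj A B) :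
    (A.1 ∩ B.1).card = k := (adj_iff.1 h).2.1

lemma step_card {n k : ℕ} {A B : Vert n k} (h : (Gr n k).Adj A B) (T : Finset ℤ) :
    (B.1 ∩ T).card ≤ (A.1 ∩ T).card + 1 := by
  have hsub : B.1 ∩ T ⊆ (A.1 ∩ T) ∪ (B.1 \ A.1) := by
    intro i hi
    obtain ⟨hiB, hiT⟩ := mem_inter.1 hi
    by_cases hiA : i ∈ A.1
    · exact mem_union_left _ (mem_inter.2 ⟨hiA, hiT⟩)
    · exact mem_union_right _ (mem_sdiff.2 ⟨hiB, hiA⟩)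
  have hBA : (B.1 \ A.1).card = 1 := by
    have h1 : (B.1 \ A.1).card + (B.1 ∩ A.1).card = B.1.card :=
      Finset.card_sdiff_add_card_inter _ _
    rw [inter_comm] at h1
    rw [adj_inter_card h, B.2.2] at h1
    omega
  calc (B.1 ∩ T).card ≤ ((A.1 ∩ T) ∪ (B.1 \ A.1)).card := card_le_card hsub
  _ ≤ (A.1 ∩ T).card + (B.1 \ A.1).card := card_union_le _ _
  _ = (A.1 ∩ T).card + 1 := by rw [hBA]

lemma walk_card {n k : ℕ} {A B : Vert n k} (w : (Gr n k).Walk A B) (T : Finset ℤ) :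
    (B.1 ∩ T).card ≤ (A.1 ∩ T).card + w.length := by
  induction w with
  | nil => simp
  | cons h p ih =>
    have := step_card h T
    simp only [SimpleGraph.Walk.length_cons]
    omega

lemma adj_no_opp {n k : ℕ} {A B : Vert n k} (h : (Gr n k).Adj A B) :
    ∀ i ∈ B.1, -i ∉ A.1 := by
  intro i hiB hiA
  have hsing := (adj_iff.1 h).2.2.2
  exact hsing i (mem_union_right _ hiB) (mem_union_left _ hiA)

lemma walkLB {n k : ℕ} {X0 Y0 : Vert n k} (hopp : ∀ y ∈ Y0.1, -y ∈ X0.1) :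
    ∀ w : (Gr n k).Walk X0 Y0, k + 2 ≤ w.length := by
  intro w
  cases w with
  | nil =>
    exfalso
    obtain ⟨y, hy⟩ := card_pos.1 (by rw [X0.2.2]; omega : 0 < X0.1.card)
    exact X0.2.1.2 y hy (hopp y hy)
  | @cons _ Z _ h p =>
    have hZY : Z.1 ∩ Y0.1 = ∅ := by
      rw [Finset.eq_empty_iff_forall_notMem]
      intro i hi
      obtain ⟨hiZ, hiY⟩ := mem_inter.1 hi
      exact adj_no_opp h i hiZ (hopp i hiY)
    have hM := walk_card p Y0.1
    rw [hZY, card_empty, inter_self, Y0.2.2] at hM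
    simp only [SimpleGraph.Walk.length_cons]
    omega


/-- For k ≤ n-2, the diameter of the polar Grassmann graph Γ_k(n) is exactly k+2. -/
theorem stmt5 (n k : ℕ) (hk : k + 2 ≤ n) : (Gr n k).diam = k + 2 := by
  have hub : ∀ U V : Vert n k, (Gr n k).edist U V ≤ ((k+2 : ℕ) : ℕ∞) := by
    intro U V
    obtain ⟨w, hw⟩ := walkUB hk U V
    exact le_trans (SimpleGraph.edist_le w) (by exact_mod_cast hw)
  have hediam_le : (Gr n k).ediam ≤ ((k+2:ℕ) : ℕ∞) := SimpleGraph.ediam_le_of_edist_le hub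
  have hX0 : Sing n (Finset.Icc (1:ℤ) (k+1)) ∧ (Finset.Icc (1:ℤ) (k+1)).card = k+1 := by
    refine ⟨⟨?_, ?_⟩, ?_⟩
    · intro i hi
      rw [Finset.mem_Icc] at hi
      simp only [polarJ, mem_erase, Finset.mem_Icc]
      have hn : ((k:ℤ)+1) ≤ (n:ℤ) := by exact_mod_cast (by omega : k+1 ≤ n)
      have h0 : (0:ℤ) ≤ (n:ℤ) := Int.natCast_nonneg n
      push_cast at hi ⊢
      omega
    · intro i hi hni
      rw [Finset.mem_Icc] at hi hni
      omega
    · rw [Int.card_Icc]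
      push_cast
      omega
  have hY0 : Sing n (Finset.Icc (-(k+1):ℤ) (-1)) ∧ (Finset.Icc (-(k+1):ℤ) (-1)).card = k+1 := by
    refine ⟨⟨?_, ?_⟩, ?_⟩
    · intro i hi
      rw [Finset.mem_Icc] at hi
      simp only [polarJ, mem_erase, Finset.mem_Icc]
      have hn : ((k:ℤ)+1) ≤ (n:ℤ) := by exact_mod_cast (by omega : k+1 ≤ n)
      have h0 : (0:ℤ) ≤ (n:ℤ) := Int.natCast_nonneg n
      push_cast at hi ⊢
      omega
    · intro i hi hni
      rw [Finset.mem_Icc] at hi hni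
      omega
    · rw [Int.card_Icc]
      push_cast
      omega
  let X0 : Vert n k := ⟨_, hX0⟩
  let Y0 : Vert n k := ⟨_, hY0⟩
  have hopp : ∀ y ∈ Y0.1, -y ∈ X0.1 := by
    intro y hy
    rw [Finset.mem_Icc] at hy ⊢
    omega
  have hne_top : (Gr n k).edist X0 Y0 ≠ ⊤ :=
    (lt_of_le_of_lt (hub X0 Y0) (ENat.coe_lt_top _)).ne
  obtain ⟨p, hp⟩ := SimpleGraph.exists_walk_of_edist_ne_top hne_top
  have hge : ((k+2:ℕ):ℕ∞) ≤ (Gr n k).edist X0 Y0 := by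
    rw [← hp]
    exact_mod_cast walkLB hopp p
  have hediam : (Gr n k).ediam = ((k+2:ℕ):ℕ∞) :=
    le_antisymm hediam_le (le_trans hge SimpleGraph.edist_le_ediam)
  rw [SimpleGraph.diam, hediam, ENat.toNat_coe]
end

section
/- If three pairwise adjacent, distinct vertices S₁, S₂, S₃ of the polar Grassmann graph Γ_k(n) of the thin polar space Π_n (with 1 ≤ k ≤ n−3, vertices being (k+1)-element singular subsets) do not lie on a common line, then either |S₁ ∩ S₂ ∩ S₃| = k and |S₁ ∪ S₂ ∪ S₃| = k+3 (star-triangle), or |S₁ ∩ S₂ ∩ S₃| = k−1 and |S₁ ∪ S₂ ∪ S₃| = k+2 (top-triangle). -/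
open Finset

/-- Triangle classification in Γ_k(n), 1 ≤ k ≤ n-3: a triangle (three pairwise adjacent
distinct vertices, not on a common line) is either a star-triangle or a top-triangle. -/
theorem stmt10 (n k : ℕ) (hk1 : 1 ≤ k) (hk2 : k + 3 ≤ n)
    (S1 S2 S3 : Finset ℤ)
    (h1 : Sing n S1 ∧ S1.card = k + 1) (h2 : Sing n S2 ∧ S2.card = k + 1)
    (h3 : Sing n S3 ∧ S3.card = k + 1)
    (hne12 : S1 ≠ S2) (hne13 : S1 ≠ S3) (hne23 : S2 ≠ S3)
    (a12 : (S1 ∩ S2).card = k ∧ Sing n (S1 ∪ S2))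
    (a13 : (S1 ∩ S3).card = k ∧ Sing n (S1 ∪ S3))
    (a23 : (S2 ∩ S3).card = k ∧ Sing n (S2 ∪ S3))
    (hline : ¬ ∃ S U : Finset ℤ, Sing n U ∧ S.card = k ∧ U.card = k + 2 ∧
      S ⊆ S1 ∧ S1 ⊆ U ∧ S ⊆ S2 ∧ S2 ⊆ U ∧ S ⊆ S3 ∧ S3 ⊆ U) :
    ((S1 ∩ S2 ∩ S3).card = k ∧ (S1 ∪ S2 ∪ S3).card = k + 3) ∨
    ((S1 ∩ S2 ∩ S3).card = k - 1 ∧ (S1 ∪ S2 ∪ S3).card = k + 2) := by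
  obtain ⟨c12, -⟩ := a12
  obtain ⟨c13, -⟩ := a13
  obtain ⟨c23, -⟩ := a23
  obtain ⟨-, c1⟩ := h1
  have ht_le : (S1 ∩ S2 ∩ S3).card ≤ k := by
    rw [← c12]; exact card_le_card inter_subset_left
  have hAB : (S1 ∩ S2) ∩ (S1 ∩ S3) = S1 ∩ S2 ∩ S3 := by
    ext x; simp only [mem_inter]; tauto
  have hIE := Finset.card_union_add_card_inter (S1 ∩ S2) (S1 ∩ S3)
  rw [hAB, c12, c13] at hIE
  have hUle : ((S1 ∩ S2) ∪ (S1 ∩ S3)).card ≤ k + 1 := by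
    rw [← c1]
    exact card_le_card (union_subset inter_subset_left inter_subset_left)
  have e1 := Finset.card_union_add_card_inter S1 S2
  have e2 := Finset.card_union_add_card_inter (S1 ∪ S2) S3
  have e3 := Finset.card_union_add_card_inter (S1 ∩ S3) (S2 ∩ S3)
  have hd : (S1 ∪ S2) ∩ S3 = (S1 ∩ S3) ∪ (S2 ∩ S3) := by
    ext x; simp only [mem_inter, mem_union]; tauto
  have hBC : (S1 ∩ S3) ∩ (S2 ∩ S3) = S1 ∩ S2 ∩ S3 := by
    ext x; simp only [mem_inter]; tauto
  rw [hd] at e2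
  rw [hBC, c13, c23] at e3
  rw [c12, c1, h2.2] at e1
  rw [h3.2] at e2
  omega
end

section
/- In the polar Grassmann graph Γ_k(n) of the thin polar space Π_n with 1 ≤ k ≤ n−3 (vertices: (k+1)-element singular subsets), the maximal cliques are exactly the stars [S,U] = {X : S ⊆ X ⊆ U, |X| = k+1} with S singular of size k and U maximal singular (size n), and the tops ⟨U] = {X : X ⊆ U, |X| = k+1} with U singular of size k+2. -/
open Finset

/-- A clique of Γ_k(n), viewed as a family of (k+1)-element singular subsets. -/
def IsCliqueF (n k : ℕ) (C : Set (Finset ℤ)) : Prop :=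
  (∀ X ∈ C, Sing n X ∧ X.card = k + 1) ∧
  ∀ X ∈ C, ∀ Y ∈ C, X ≠ Y → (X ∩ Y).card = k ∧ Sing n (X ∪ Y)

/-- A maximal clique of Γ_k(n). -/
def IsMaxCliqueF (n k : ℕ) (C : Set (Finset ℤ)) : Prop :=
  IsCliqueF n k C ∧ ∀ D : Set (Finset ℤ), IsCliqueF n k D → C ⊆ D → C = D

lemma sing_mono {n : ℕ} {S T : Finset ℤ} (h : S ⊆ T) (hT : Sing n T) : Sing n S :=
  ⟨h.trans hT.1, fun i hi hni => hT.2 i (h hi) (h hni)⟩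

lemma mem_polarJ {n : ℕ} {x : ℤ} : x ∈ polarJ n ↔ x ≠ 0 ∧ -(n:ℤ) ≤ x ∧ x ≤ n := by
  simp [polarJ, Finset.mem_erase, Finset.mem_Icc, and_assoc]

/-- Every singular set extends to a maximal singular set of size n. -/
lemma sing_extend {n : ℕ} {W : Finset ℤ} (hW : Sing n W) :
    ∃ U : Finset ℤ, Sing n U ∧ W ⊆ U ∧ U.card = n := by
  classical
  set U := (Finset.Icc (1:ℤ) (n:ℤ)).image (fun i => if -i ∈ W then -i else i) with hU
  have habs : ∀ i ∈ Finset.Icc (1:ℤ) (n:ℤ), |(if -i ∈ W then -i else i)| = i := by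
    intro i hi
    have h1 : (1:ℤ) ≤ i := (Finset.mem_Icc.mp hi).1
    split <;> [rw [abs_neg]; skip] <;> exact abs_of_pos (by omega)
  have hinj : ∀ i ∈ Finset.Icc (1:ℤ) (n:ℤ), ∀ j ∈ Finset.Icc (1:ℤ) (n:ℤ),
      (if -i ∈ W then -i else i) = (if -j ∈ W then -j else j) → i = j := by
    intro i hi j hj h
    have h1 := habs i hi; have h2 := habs j hj
    rw [h] at h1; omega
  refine ⟨U, ⟨?_, ?_⟩, ?_, ?_⟩
  · intro x hx
    simp only [hU, Finset.mem_image] at hx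
    obtain ⟨i, hi, rfl⟩ := hx
    rw [Finset.mem_Icc] at hi
    rw [mem_polarJ]
    split <;> omega
  · intro x hx hnx
    simp only [hU, Finset.mem_image] at hx hnx
    obtain ⟨i, hi, hxi⟩ := hx
    obtain ⟨j, hj, hji⟩ := hnx
    have h1 := habs i hi; have h2 := habs j hj
    rw [hxi] at h1; rw [hji] at h2
    rw [abs_neg] at h2
    have : i = j := by omega
    subst this
    rw [← hxi] at hji
    have h1' : (1:ℤ) ≤ i := (Finset.mem_Icc.mp hi).1
    split at hji <;> omega
  · intro w hw
    have hwJ := hW.1 hw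
    rw [mem_polarJ] at hwJ
    simp only [hU, Finset.mem_image]
    rcases lt_or_gt_of_ne hwJ.1 with hneg | hpos
    · refine ⟨-w, by rw [Finset.mem_Icc]; omega, ?_⟩
      simp only [neg_neg]
      rw [if_pos hw]
    · refine ⟨w, by rw [Finset.mem_Icc]; omega, ?_⟩
      rw [if_neg (hW.2 w hw)]
  · rw [hU, Finset.card_image_of_injOn (fun i hi j hj => hinj i hi j hj)]
    rw [Int.card_Icc]
    simp

/-- A maximal singular set contains one of j, -j for every j ∈ J. -/
lemma max_sing_mem {n : ℕ} {U : Finset ℤ} (hU : Sing n U) (hcard : U.card = n)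
    {j : ℤ} (hj : j ∈ polarJ n) : j ∈ U ∨ -j ∈ U := by
  classical
  by_contra h
  push_neg at h
  -- U.image abs = Icc 1 n
  have hinj : Set.InjOn (fun x : ℤ => |x|) U := by
    intro x hx y hy hxy
    replace hx := Finset.mem_coe.mp hx
    replace hy := Finset.mem_coe.mp hy
    simp only at hxy
    rcases abs_eq_abs.mp hxy with h | h
    · exact h
    · exact absurd (h ▸ hx) (hU.2 y hy)
  have hsub : U.image (fun x : ℤ => |x|) ⊆ Finset.Icc (1:ℤ) n := by
    intro x hx
    simp only [Finset.mem_image] at hx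
    obtain ⟨y, hy, rfl⟩ := hx
    have := mem_polarJ.mp (hU.1 hy)
    rw [Finset.mem_Icc]
    rcases abs_cases y with ⟨h1, h2⟩ | ⟨h1, h2⟩ <;> omega
  have hcard2 : (U.image (fun x : ℤ => |x|)).card = n := by
    rw [Finset.card_image_of_injOn hinj, hcard]
  have heq : U.image (fun x : ℤ => |x|) = Finset.Icc (1:ℤ) n := by
    apply Finset.eq_of_subset_of_card_le hsub
    rw [hcard2, Int.card_Icc]; simp
  have hjm : |j| ∈ Finset.Icc (1:ℤ) n := by
    have := mem_polarJ.mp hj; rw [Finset.mem_Icc]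
    rcases abs_cases j with ⟨h1, h2⟩ | ⟨h1, h2⟩ <;> omega
  rw [← heq, Finset.mem_image] at hjm
  obtain ⟨u, hu, huj⟩ := hjm
  rcases abs_eq_abs.mp huj with h' | h'
  · exact h.1 (h' ▸ hu)
  · exact h.2 (by rw [← h']; exact hu)

/-- Distinct sets of the same card k+1 intersect in ≤ k elements. -/
lemma inter_card_le {k : ℕ} {X Y : Finset ℤ} (hX : X.card = k + 1) (hY : Y.card = k + 1)
    (hne : X ≠ Y) : (X ∩ Y).card ≤ k := by
  by_contra h
  push_neg at h
  have h1 : (X ∩ Y).card ≤ X.card := Finset.card_le_card (Finset.inter_subset_left)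
  have h2 : X ∩ Y = X := Finset.eq_of_subset_of_card_le Finset.inter_subset_left (by omega)
  have h3 : X ⊆ Y := by rw [← h2]; exact Finset.inter_subset_right
  exact hne (Finset.eq_of_subset_of_card_le h3 (by omega))

/-- The star [S,U] is a clique. -/
lemma star_clique {n k : ℕ} {S U : Finset ℤ} (hU : Sing n U) (hSU : S ⊆ U)
    (hS : S.card = k) :
    IsCliqueF n k {X : Finset ℤ | S ⊆ X ∧ X ⊆ U ∧ X.card = k + 1} := by
  constructor
  · rintro X ⟨_, hXU, hXc⟩
    exact ⟨⟨hXU.trans hU.1, fun i hi hni => hU.2 i (hXU hi) (hXU hni)⟩, hXc⟩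
  · rintro X ⟨hSX, hXU, hXc⟩ Y ⟨hSY, hYU, hYc⟩ hne
    constructor
    · have h1 : S ⊆ X ∩ Y := Finset.subset_inter hSX hSY
      have h2 := Finset.card_le_card h1
      have h3 := inter_card_le hXc hYc hne
      omega
    · have hXYU : X ∪ Y ⊆ U := Finset.union_subset hXU hYU
      exact ⟨hXYU.trans hU.1, fun i hi hni => hU.2 i (hXYU hi) (hXYU hni)⟩

/-- The top ⟨U] is a clique. -/
lemma top_clique {n k : ℕ} {U : Finset ℤ} (hU : Sing n U) (hUc : U.card = k + 2) :
    IsCliqueF n k {X : Finset ℤ | X ⊆ U ∧ X.card = k + 1} := by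
  constructor
  · rintro X ⟨hXU, hXc⟩
    exact ⟨⟨hXU.trans hU.1, fun i hi hni => hU.2 i (hXU hi) (hXU hni)⟩, hXc⟩
  · rintro X ⟨hXU, hXc⟩ Y ⟨hYU, hYc⟩ hne
    constructor
    · have h3 := inter_card_le hXc hYc hne
      have h4 : (X ∪ Y).card ≤ k + 2 := hUc ▸ Finset.card_le_card (Finset.union_subset hXU hYU)
      have h5 := Finset.card_union_add_card_inter X Y
      omega
    · have hXYU : X ∪ Y ⊆ U := Finset.union_subset hXU hYU
      exact ⟨hXYU.trans hU.1, fun i hi hni => hU.2 i (hXYU hi) (hXYU hni)⟩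

lemma two_ksubsets_union {k : ℕ} (hk1 : 1 ≤ k) {X A B : Finset ℤ} (hX : X.card = k + 1)
    (hA : A ⊆ X) (hB : B ⊆ X) (hAc : A.card = k) (hBc : B.card = k) (hne : A ≠ B) :
    A ∪ B = X ∧ (A ∩ B).card = k - 1 := by
  have hABle : (A ∩ B).card ≤ k - 1 := by
    by_contra h
    push_neg at h
    have h1 : (A ∩ B).card ≤ k := hAc ▸ Finset.card_le_card Finset.inter_subset_left
    have h2 : A ∩ B = A := Finset.eq_of_subset_of_card_le Finset.inter_subset_left (by omega)
    have h3 : A ⊆ B := by rw [← h2]; exact Finset.inter_subset_right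
    exact hne (Finset.eq_of_subset_of_card_le h3 (by omega))
  have hsum := Finset.card_union_add_card_inter A B
  have hle : (A ∪ B).card ≤ k + 1 := hX ▸ Finset.card_le_card (Finset.union_subset hA hB)
  have hge : X.card ≤ (A ∪ B).card := by omega
  have heq : A ∪ B = X :=
    Finset.eq_of_subset_of_card_le (Finset.union_subset hA hB) hge
  refine ⟨heq, ?_⟩
  rw [heq, hX] at hsum
  omega

lemma forward_dir {n k : ℕ} (hk1 : 1 ≤ k) (hk2 : k + 3 ≤ n) {C : Set (Finset ℤ)}
    (h : IsMaxCliqueF n k C) :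
      ((∃ S U : Finset ℤ, Sing n U ∧ S ⊆ U ∧ S.card = k ∧ U.card = n ∧
          C = {X : Finset ℤ | S ⊆ X ∧ X ⊆ U ∧ X.card = k + 1}) ∨
       (∃ U : Finset ℤ, Sing n U ∧ U.card = k + 2 ∧
          C = {X : Finset ℤ | X ⊆ U ∧ X.card = k + 1})) := by
  classical
  obtain ⟨hC, hmax⟩ := h
  -- C is nonempty
  have hne : C.Nonempty := by
    by_contra hCne
    rw [Set.not_nonempty_iff_eq_empty] at hCne
    subst hCne
    set X₀ : Finset ℤ := Finset.Icc (1:ℤ) (k+1) with hX₀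
    have hX₀c : X₀.card = k + 1 := by
      rw [hX₀, Int.card_Icc]; simp
    have hX₀s : Sing n X₀ := by
      constructor
      · intro x hx
        rw [hX₀, Finset.mem_Icc] at hx
        rw [mem_polarJ]; omega
      · intro i hi hni
        rw [hX₀, Finset.mem_Icc] at hi hni
        omega
    have hclique : IsCliqueF n k {X₀} := by
      constructor
      · rintro X rfl; exact ⟨hX₀s, hX₀c⟩
      · rintro X rfl Y rfl hXY; exact absurd rfl hXY
    have := hmax {X₀} hclique (Set.empty_subset _)
    exact absurd this.symm (by simp)
  obtain ⟨X₀, hX₀⟩ := hne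
  have hX₀c := (hC.1 X₀ hX₀).2
  by_cases hA : ∃ S : Finset ℤ, S.card = k ∧ ∀ X ∈ C, S ⊆ X
  · -- star case
    left
    obtain ⟨S, hSc, hSX⟩ := hA
    set W : Finset ℤ := (polarJ n).filter (fun j => ∃ X ∈ C, j ∈ X) with hW
    have hXW : ∀ X ∈ C, X ⊆ W := by
      intro X hX j hj
      rw [hW, Finset.mem_filter]
      exact ⟨(hC.1 X hX).1.1 hj, X, hX, hj⟩
    have hWs : Sing n W := by
      refine ⟨Finset.filter_subset _ _, ?_⟩
      intro i hi hni
      rw [hW, Finset.mem_filter] at hi hni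
      obtain ⟨_, X, hX, hiX⟩ := hi
      obtain ⟨_, Y, hY, hiY⟩ := hni
      by_cases hXY : X = Y
      · subst hXY
        exact (hC.1 X hX).1.2 i hiX hiY
      · exact (hC.2 X hX Y hY hXY).2.2 i (Finset.mem_union_left _ hiX)
          (Finset.mem_union_right _ hiY)
    obtain ⟨U, hUs, hWU, hUc⟩ := sing_extend hWs
    refine ⟨S, U, hUs, (hSX X₀ hX₀).trans ((hXW X₀ hX₀).trans hWU), hSc, hUc, ?_⟩
    apply hmax _ (star_clique hUs ((hSX X₀ hX₀).trans ((hXW X₀ hX₀).trans hWU)) hSc)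
    intro X hX
    exact ⟨hSX X hX, (hXW X hX).trans hWU, (hC.1 X hX).2⟩
  · -- top case
    right
    push_neg at hA
    -- find Y ≠ X₀ in C
    have hY : ∃ Y ∈ C, Y ≠ X₀ := by
      by_contra hY
      push_neg at hY
      obtain ⟨S, hS, hSc⟩ := Finset.exists_subset_card_eq (s := X₀) (n := k) (by omega)
      obtain ⟨X, hX, hSX⟩ := hA S hSc
      exact hSX ((hY X hX) ▸ hS)
    obtain ⟨Y, hYC, hYX₀⟩ := hY
    have hYc := (hC.1 Y hYC).2
    set S₀ := X₀ ∩ Y with hS₀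
    have hS₀c : S₀.card = k := (hC.2 X₀ hX₀ Y hYC hYX₀.symm).1
    obtain ⟨Z, hZC, hS₀Z⟩ := hA S₀ hS₀c
    have hZX₀ : Z ≠ X₀ := fun h => hS₀Z (h ▸ Finset.inter_subset_left)
    have hZY : Z ≠ Y := fun h => hS₀Z (h ▸ Finset.inter_subset_right)
    have hZc := (hC.1 Z hZC).2
    have hXZc : (X₀ ∩ Z).card = k := (hC.2 X₀ hX₀ Z hZC hZX₀.symm).1
    have hYZc : (Y ∩ Z).card = k := (hC.2 Y hYC Z hZC hZY.symm).1
    have hABne : S₀ ≠ X₀ ∩ Z := by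
      intro h
      exact hS₀Z (h ▸ Finset.inter_subset_right)
    obtain ⟨hun, hintc⟩ := two_ksubsets_union hk1 hX₀c Finset.inter_subset_left
      Finset.inter_subset_left hS₀c hXZc hABne
    set U := X₀ ∪ Y with hU
    have hUc : U.card = k + 2 := by
      have := Finset.card_union_add_card_inter X₀ Y
      rw [hX₀c, hYc, ← hS₀, hS₀c, ← hU] at this
      omega
    have hUs : Sing n U := (hC.2 X₀ hX₀ Y hYC hYX₀.symm).2
    -- Z ⊆ U
    have hZU : Z ⊆ U := by
      have hYZX : (Y ∩ Z) ∩ X₀ = S₀ ∩ (X₀ ∩ Z) := by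
        ext x
        simp only [Finset.mem_inter, hS₀]
        tauto
      have h1 : ((Y ∩ Z) ∩ X₀).card = k - 1 := by rw [hYZX, hintc]
      have h2 := Finset.card_inter_add_card_sdiff (Y ∩ Z) X₀
      have h3 : ((Y ∩ Z) \ X₀).card = 1 := by rw [hYZc] at h2; omega
      have h4 : (Y \ X₀).card = 1 := by
        have := Finset.card_inter_add_card_sdiff Y X₀
        rw [hYc, Finset.inter_comm, ← hS₀, hS₀c] at this
        omega
      have h5 : (Y ∩ Z) \ X₀ = Y \ X₀ :=
        Finset.eq_of_subset_of_card_le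
          (Finset.sdiff_subset_sdiff Finset.inter_subset_left le_rfl) (by omega)
      have h6 : (Z \ X₀).card = 1 := by
        have := Finset.card_inter_add_card_sdiff Z X₀
        rw [hZc, Finset.inter_comm, hXZc] at this
        omega
      have h7 : (Y ∩ Z) \ X₀ ⊆ Z \ X₀ :=
        Finset.sdiff_subset_sdiff Finset.inter_subset_right le_rfl
      have h8 : (Y ∩ Z) \ X₀ = Z \ X₀ :=
        Finset.eq_of_subset_of_card_le h7 (by omega)
      intro z hz
      rw [hU, Finset.mem_union]
      by_cases hzX : z ∈ X₀
      · exact Or.inl hzX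
      · right
        have : z ∈ Z \ X₀ := Finset.mem_sdiff.mpr ⟨hz, hzX⟩
        rw [← h8, h5] at this
        exact (Finset.mem_sdiff.mp this).1
    -- every W ∈ C is contained in U
    have hWU : ∀ W ∈ C, W ⊆ U := by
      intro W hWC
      by_contra hWU
      obtain ⟨w, hwW, hwU⟩ := Finset.not_subset.mp hWU
      have hWc := (hC.1 W hWC).2
      have hWX₀ : W ≠ X₀ := fun h => hwU (Finset.mem_union_left _ (h ▸ hwW))
      have hWY : W ≠ Y := fun h => hwU (Finset.mem_union_right _ (h ▸ hwW))
      have hWZ : W ≠ Z := fun h => hwU (hZU (h ▸ hwW))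
      have hWUle : (W ∩ U).card ≤ k := by
        have hsub : W ∩ U ⊆ W.erase w := by
          intro y hy
          rw [Finset.mem_inter] at hy
          rw [Finset.mem_erase]
          exact ⟨fun h => hwU (h ▸ hy.2), hy.1⟩
        have := Finset.card_le_card hsub
        rw [Finset.card_erase_of_mem hwW, hWc] at this
        omega
      have key : ∀ A ∈ C, A ⊆ U → W ≠ A → W ∩ A = W ∩ U := by
        intro A hAC hAU hWA
        have hcard : (W ∩ A).card = k := (hC.2 W hWC A hAC hWA).1
        exact Finset.eq_of_subset_of_card_le
          (Finset.inter_subset_inter (Finset.Subset.refl W) hAU) (by omega)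
      have e1 : W ∩ X₀ = W ∩ U := key X₀ hX₀ Finset.subset_union_left hWX₀
      have e2 : W ∩ Y = W ∩ U := key Y hYC Finset.subset_union_right hWY
      have e3 : W ∩ Z = W ∩ U := key Z hZC hZU hWZ
      have hsubS₀ : W ∩ X₀ ⊆ S₀ := by
        rw [hS₀]
        intro x hx
        rw [Finset.mem_inter] at hx ⊢
        refine ⟨hx.2, ?_⟩
        have : x ∈ W ∩ Y := by rw [e2, ← e1]; exact Finset.mem_inter.mpr hx
        exact (Finset.mem_inter.mp this).2
      have hWX₀c : (W ∩ X₀).card = k := (hC.2 W hWC X₀ hX₀ hWX₀).1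
      have hS₀eq : W ∩ X₀ = S₀ :=
        Finset.eq_of_subset_of_card_le hsubS₀ (by rw [hS₀c, hWX₀c])
      apply hS₀Z
      rw [← hS₀eq, e1, ← e3]
      exact Finset.inter_subset_right
    refine ⟨U, hUs, hUc, ?_⟩
    apply hmax _ (top_clique hUs hUc)
    intro X hX
    exact ⟨hWU X hX, (hC.1 X hX).2⟩

lemma star_max {n k : ℕ} (hk1 : 1 ≤ k) (hk2 : k + 3 ≤ n) {S U : Finset ℤ}
    (hU : Sing n U) (hSU : S ⊆ U) (hS : S.card = k) (hUc : U.card = n)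
    (D : Set (Finset ℤ)) (hD : IsCliqueF n k D)
    (hCD : {X : Finset ℤ | S ⊆ X ∧ X ⊆ U ∧ X.card = k + 1} ⊆ D) :
    {X : Finset ℤ | S ⊆ X ∧ X ⊆ U ∧ X.card = k + 1} = D := by
  classical
  apply Set.Subset.antisymm hCD
  intro Z hZ
  by_contra hZC
  simp only [Set.mem_setOf_eq] at hZC
  have hmem : ∀ u ∈ U \ S, (insert u S ∈ D ∧ (insert u S).card = k + 1) := by
    intro u hu
    rw [Finset.mem_sdiff] at hu
    have hc : (insert u S).card = k + 1 := by rw [Finset.card_insert_of_notMem hu.2, hS]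
    exact ⟨hCD ⟨Finset.subset_insert u S, Finset.insert_subset hu.1 hSU, hc⟩, hc⟩
  have hZsing := (hD.1 Z hZ).1
  have hZc := (hD.1 Z hZ).2
  -- Step 1: S ⊆ Z
  have hSZ : S ⊆ Z := by
    by_contra hs
    obtain ⟨s, hsS, hsZ⟩ := Finset.not_subset.mp hs
    have hsub : (S \ {s}) ∪ (U \ S) ⊆ Z := by
      apply Finset.union_subset
      · intro x hx
        rw [Finset.mem_sdiff, Finset.mem_singleton] at hx
        -- use any u ∈ U \ S : nonempty since card = n - k > 0
        have hne : (U \ S).Nonempty := by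
          rw [← Finset.card_pos, Finset.card_sdiff_of_subset hSU, hS, hUc]; omega
        obtain ⟨u, hu⟩ := hne
        obtain ⟨hXD, hXc⟩ := hmem u hu
        have huS := (Finset.mem_sdiff.mp hu).2
        have hZX : Z ≠ insert u S := by
          intro h; exact hsZ (h ▸ Finset.mem_insert_of_mem hsS)
        have hk' := (hD.2 Z hZ _ hXD hZX).1
        have hsubk : Z ∩ insert u S ⊆ (insert u S).erase s := by
          intro y hy
          rw [Finset.mem_inter] at hy
          rw [Finset.mem_erase]
          exact ⟨fun h => hsZ (h ▸ hy.1), hy.2⟩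
        have hcek : ((insert u S).erase s).card = k := by
          rw [Finset.card_erase_of_mem (Finset.mem_insert_of_mem hsS), hXc]
          omega
        have heq : Z ∩ insert u S = (insert u S).erase s :=
          Finset.eq_of_subset_of_card_le hsubk (by rw [hcek, hk'])
        have : x ∈ Z ∩ insert u S := by
          rw [heq, Finset.mem_erase]
          exact ⟨hx.2, Finset.mem_insert_of_mem hx.1⟩
        exact (Finset.mem_inter.mp this).1
      · intro u hu
        obtain ⟨hXD, hXc⟩ := hmem u hu
        have hZX : Z ≠ insert u S := by
          intro h; exact hsZ (h ▸ Finset.mem_insert_of_mem hsS)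
        have hk' := (hD.2 Z hZ _ hXD hZX).1
        have hsubk : Z ∩ insert u S ⊆ (insert u S).erase s := by
          intro y hy
          rw [Finset.mem_inter] at hy
          rw [Finset.mem_erase]
          exact ⟨fun h => hsZ (h ▸ hy.1), hy.2⟩
        have hcek : ((insert u S).erase s).card = k := by
          rw [Finset.card_erase_of_mem (Finset.mem_insert_of_mem hsS), hXc]
          omega
        have heq : Z ∩ insert u S = (insert u S).erase s :=
          Finset.eq_of_subset_of_card_le hsubk (by rw [hcek, hk'])
        have : u ∈ Z ∩ insert u S := by
          rw [heq, Finset.mem_erase]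
          have huS := (Finset.mem_sdiff.mp hu).2
          refine ⟨fun h => huS (h ▸ hsS), Finset.mem_insert_self u S⟩
        exact (Finset.mem_inter.mp this).1
    have hdisj : Disjoint (S \ {s}) (U \ S) := by
      apply Finset.disjoint_left.mpr
      intro a ha hb
      exact (Finset.mem_sdiff.mp hb).2 (Finset.mem_sdiff.mp ha).1
    have hc1 : ((S \ {s}) ∪ (U \ S)).card = (k - 1) + (n - k) := by
      rw [Finset.card_union_of_disjoint hdisj,
        Finset.card_sdiff_of_subset (Finset.singleton_subset_iff.mpr hsS),
        Finset.card_sdiff_of_subset hSU, hS, hUc, Finset.card_singleton]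
    have := Finset.card_le_card hsub
    rw [hc1, hZc] at this
    omega
  -- Step 2: Z = insert z S
  have hZS : (Z \ S).card = 1 := by rw [Finset.card_sdiff_of_subset hSZ, hZc, hS]; omega
  obtain ⟨z, hz⟩ := Finset.card_eq_one.mp hZS
  have hzZ : z ∈ Z := (Finset.mem_sdiff.mp (hz ▸ Finset.mem_singleton_self z)).1
  have hzS : z ∉ S := (Finset.mem_sdiff.mp (hz ▸ Finset.mem_singleton_self z)).2
  have hZeq : Z = insert z S := by
    apply Finset.eq_of_subset_of_card_le
    · intro x hx
      by_cases h : x ∈ S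
      · exact Finset.mem_insert_of_mem h
      · have : x ∈ Z \ S := Finset.mem_sdiff.mpr ⟨hx, h⟩
        rw [hz, Finset.mem_singleton] at this
        exact this ▸ Finset.mem_insert_self z S
    · rw [Finset.card_insert_of_notMem hzS, hS, hZc]
  have hzJ : z ∈ polarJ n := hZsing.1 hzZ
  -- Step 3: z ∉ U (else Z ∈ C)
  have hzU : z ∉ U := by
    intro h
    exact hZC ⟨hSZ, by rw [hZeq]; exact Finset.insert_subset h hSU, hZc⟩
  have hnzU : -z ∈ U := (max_sing_mem hU hUc hzJ).resolve_left hzU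
  by_cases hnzS : -z ∈ S
  · exact hZsing.2 z hzZ (hSZ hnzS)
  · have hmem' := hmem (-z) (Finset.mem_sdiff.mpr ⟨hnzU, hnzS⟩)
    have hZX : Z ≠ insert (-z) S := by
      intro h
      apply hzU
      have : z ∈ insert (-z) S := h ▸ hzZ
      rcases Finset.mem_insert.mp this with h' | h'
      · have : z ≠ 0 := (mem_polarJ.mp hzJ).1
        omega
      · exact absurd h' hzS
    have hsing := (hD.2 Z hZ _ hmem'.1 hZX).2
    exact hsing.2 z (Finset.mem_union_left _ hzZ)
      (Finset.mem_union_right _ (Finset.mem_insert_self _ _))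

lemma top_max {n k : ℕ} (hk1 : 1 ≤ k) {U : Finset ℤ}
    (hU : Sing n U) (hUc : U.card = k + 2)
    (D : Set (Finset ℤ)) (hD : IsCliqueF n k D)
    (hCD : {X : Finset ℤ | X ⊆ U ∧ X.card = k + 1} ⊆ D) :
    {X : Finset ℤ | X ⊆ U ∧ X.card = k + 1} = D := by
  classical
  apply Set.Subset.antisymm hCD
  intro Z hZ
  by_contra hZC
  simp only [Set.mem_setOf_eq] at hZC
  have hZc := (hD.1 Z hZ).2
  have hZnU : ¬ Z ⊆ U := fun h => hZC ⟨h, hZc⟩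
  obtain ⟨z, hzZ, hzU⟩ := Finset.not_subset.mp hZnU
  have hmem : ∀ x ∈ U, U.erase x ∈ D ∧ (U.erase x).card = k + 1 := by
    intro x hx
    have hc : (U.erase x).card = k + 1 := by rw [Finset.card_erase_of_mem hx, hUc]; omega
    exact ⟨hCD ⟨Finset.erase_subset x U, hc⟩, hc⟩
  have hZUcard : (Z ∩ U).card ≤ k := by
    have : Z ∩ U ⊆ Z.erase z := by
      intro y hy
      rw [Finset.mem_inter] at hy
      rw [Finset.mem_erase]
      exact ⟨fun h => hzU (h ▸ hy.2), hy.1⟩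
    have := Finset.card_le_card this
    rw [Finset.card_erase_of_mem hzZ, hZc] at this
    omega
  have key : ∀ x ∈ U, x ∉ Z ∧ (Z ∩ U).card = k := by
    intro x hx
    obtain ⟨hXD, hXc⟩ := hmem x hx
    have hZX : Z ≠ U.erase x := by
      intro h
      exact hzU (Finset.erase_subset x U (h ▸ hzZ))
    have hk' := (hD.2 Z hZ _ hXD hZX).1
    have h1 : Z ∩ U.erase x = (Z ∩ U).erase x := by
      ext y
      simp only [Finset.mem_inter, Finset.mem_erase]
      tauto
    rw [h1] at hk'
    by_cases h : x ∈ Z ∩ U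
    · rw [Finset.card_erase_of_mem h] at hk'; omega
    · rw [Finset.erase_eq_of_notMem h] at hk'
      exact ⟨fun hxZ => h (Finset.mem_inter.mpr ⟨hxZ, hx⟩), hk'⟩
  have hUne : U.Nonempty := by rw [← Finset.card_pos, hUc]; omega
  obtain ⟨x, hx⟩ := hUne
  have hZU : Z ∩ U = ∅ := by
    rw [Finset.eq_empty_iff_forall_notMem]
    intro y hy
    rw [Finset.mem_inter] at hy
    exact (key y hy.2).1 hy.1
  have := (key x hx).2
  rw [hZU] at this
  simp at this
  omega


/-- For 1 ≤ k ≤ n-3, the maximal cliques of Γ_k(n) are exactly the stars and the tops. -/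
theorem stmt11 (n k : ℕ) (hk1 : 1 ≤ k) (hk2 : k + 3 ≤ n) (C : Set (Finset ℤ)) :
    IsMaxCliqueF n k C ↔
      ((∃ S U : Finset ℤ, Sing n U ∧ S ⊆ U ∧ S.card = k ∧ U.card = n ∧
          C = {X : Finset ℤ | S ⊆ X ∧ X ⊆ U ∧ X.card = k + 1}) ∨
       (∃ U : Finset ℤ, Sing n U ∧ U.card = k + 2 ∧
          C = {X : Finset ℤ | X ⊆ U ∧ X.card = k + 1})) := by
  constructor
  · exact fun h => forward_dir hk1 hk2 h
  · rintro (⟨S, U, hUs, hSU, hSc, hUc, rfl⟩ | ⟨U, hUs, hUc, rfl⟩)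
    · exact ⟨star_clique hUs hSU hSc,
        fun D hD hCD => star_max hk1 hk2 hUs hSU hSc hUc D hD hCD⟩
    · exact ⟨top_clique hUs hUc,
        fun D hD hCD => top_max hk1 hUs hUc D hD hCD⟩
end

section
/- Let S be a k-element singular subset of Π_n (1 ≤ k ≤ n−1). The big star [S⟩, consisting of all (k+1)-element singular subsets of Π_n containing S, together with the induced lines, is isomorphic to the thin polar space Π_{n−k}: explicitly, the map i ↦ S ∪ {i} is a bijection from the points of J collinear with all points of S and not in S onto [S⟩, and this set of points with the inherited collinearity is isomorphic to Π_{n−k}. -/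
open Finset

lemma polarJ_ne_zero {n : ℕ} {i : ℤ} (h : i ∈ polarJ n) : i ≠ 0 := by
  simp [polarJ] at h; exact h.1

lemma polarJ_neg {n : ℕ} {i : ℤ} (h : i ∈ polarJ n) : -i ∈ polarJ n := by
  simp [polarJ] at h ⊢; omega

lemma polarJ_card (n : ℕ) : (polarJ n).card = 2 * n := by
  have h0 : (0:ℤ) ∈ Finset.Icc (-(n:ℤ)) (n:ℤ) := by
    simp [Int.ofNat_nonneg]
  rw [polarJ, card_erase_of_mem h0, Int.card_Icc]
  omega

/-- Any two equinumerous zero-free negation-closed finite sets of integers admit a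
negation-equivariant bijection. -/
lemma negEquiv (s t : Finset ℤ) (hs : ∀ i ∈ s, -i ∈ s) (hs0 : (0:ℤ) ∉ s)
    (ht : ∀ i ∈ t, -i ∈ t) (ht0 : (0:ℤ) ∉ t) (hcard : s.card = t.card) :
    ∃ e : {i : ℤ // i ∈ s} ≃ {j : ℤ // j ∈ t},
      ∀ a b : {i : ℤ // i ∈ s}, (b.1 = -a.1 ↔ (e b).1 = -(e a).1) := by
  set sp := s.filter (fun i => 0 < i) with hsp
  set tp := t.filter (fun i => 0 < i) with htp
  have keycard : ∀ (u : Finset ℤ), ((0:ℤ) ∉ u) → (∀ i ∈ u, -i ∈ u) →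
      u.card = 2 * (u.filter (fun i => 0 < i)).card := by
    intro u hu0 hu
    have himg : (u.filter (fun i => 0 < i)).image (fun i => -i) = u.filter (fun i => i < 0) := by
      ext x
      simp only [mem_image, mem_filter]
      constructor
      · rintro ⟨y, ⟨hy, hy0⟩, rfl⟩
        exact ⟨hu y hy, by omega⟩
      · rintro ⟨hx, hx0⟩
        exact ⟨-x, ⟨hu x hx, by omega⟩, by ring⟩
    have hinj : Set.InjOn (fun i : ℤ => -i) (u.filter (fun i => 0 < i)) := by
      intro a _ b _ h
      simpa using h
    have h1 : (u.filter (fun i => 0 < i)).card = (u.filter (fun i => i < 0)).card := by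
      rw [← himg, card_image_of_injOn hinj]
    have h2 : (u.filter (fun i => 0 < i)).card + (u.filter (fun i => ¬ 0 < i)).card = u.card :=
      card_filter_add_card_filter_not _
    have h3 : u.filter (fun i => ¬ 0 < i) = u.filter (fun i => i < 0) := by
      apply filter_congr
      intro x hx
      have hx0 : x ≠ 0 := fun h => hu0 (h ▸ hx)
      constructor <;> (intro; omega)
    rw [h3] at h2
    omega
  have hcardp : sp.card = tp.card := by
    have h1 := keycard s hs0 hs
    have h2 := keycard t ht0 ht
    rw [← hsp] at h1
    rw [← htp] at h2
    omega
  have f := Finset.equivOfCardEq hcardp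
  have memsp : ∀ (a : {i : ℤ // i ∈ s}), ¬ 0 < a.1 → (-a.1 ∈ sp) := by
    intro a ha
    have h0 : a.1 ≠ 0 := fun h => hs0 (h ▸ a.2)
    simp only [hsp, mem_filter]
    exact ⟨hs _ a.2, by omega⟩
  have memtp : ∀ (b : {j : ℤ // j ∈ t}), ¬ 0 < b.1 → (-b.1 ∈ tp) := by
    intro b hb
    have h0 : b.1 ≠ 0 := fun h => ht0 (h ▸ b.2)
    simp only [htp, mem_filter]
    exact ⟨ht _ b.2, by omega⟩
  have memsp' : ∀ (a : {i : ℤ // i ∈ s}), 0 < a.1 → (a.1 ∈ sp) := by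
    intro a ha
    simp only [hsp, mem_filter]
    exact ⟨a.2, ha⟩
  have memtp' : ∀ (b : {j : ℤ // j ∈ t}), 0 < b.1 → (b.1 ∈ tp) := by
    intro b hb
    simp only [htp, mem_filter]
    exact ⟨b.2, hb⟩
  have ftp : ∀ x : {i : ℤ // i ∈ sp}, (f x).1 ∈ t ∧ 0 < (f x).1 := by
    intro x
    have := (f x).2
    simp only [htp, mem_filter] at this
    exact this
  have fstp : ∀ y : {j : ℤ // j ∈ tp}, (f.symm y).1 ∈ s ∧ 0 < (f.symm y).1 := by
    intro y
    have := (f.symm y).2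
    simp only [hsp, mem_filter] at this
    exact this
  refine ⟨{
    toFun := fun a => if h : 0 < a.1
      then ⟨(f ⟨a.1, memsp' a h⟩).1, (ftp _).1⟩
      else ⟨-(f ⟨-a.1, memsp a h⟩).1, by
        have := (ftp ⟨-a.1, memsp a h⟩).1; exact ht _ this⟩
    invFun := fun b => if h : 0 < b.1
      then ⟨(f.symm ⟨b.1, memtp' b h⟩).1, (fstp _).1⟩
      else ⟨-(f.symm ⟨-b.1, memtp b h⟩).1, by
        have := (fstp ⟨-b.1, memtp b h⟩).1; exact hs _ this⟩
    left_inv := ?_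
    right_inv := ?_ }, ?_⟩
  · intro a
    by_cases h : 0 < a.1
    · simp only [dif_pos h]
      have hpos := (ftp ⟨a.1, memsp' a h⟩).2
      simp only [dif_pos hpos]
      apply Subtype.ext
      have key : ∀ hv, (⟨(f ⟨a.1, memsp' a h⟩).1, hv⟩ : {j : ℤ // j ∈ tp})
          = f ⟨a.1, memsp' a h⟩ := fun hv => rfl
      show (f.symm _).1 = a.1
      rw [key, f.symm_apply_apply]
    · simp only [dif_neg h]
      have hpos := (ftp ⟨-a.1, memsp a h⟩).2
      have hneg : ¬ 0 < -(f ⟨-a.1, memsp a h⟩).1 := by omega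
      simp only [dif_neg hneg]
      apply Subtype.ext
      show -(f.symm _).1 = a.1
      have key : ∀ hv, (⟨-(-(f ⟨-a.1, memsp a h⟩).1), hv⟩ : {j : ℤ // j ∈ tp})
          = f ⟨-a.1, memsp a h⟩ := fun hv => Subtype.ext (neg_neg _)
      rw [key, f.symm_apply_apply]
      simp
  · intro b
    by_cases h : 0 < b.1
    · simp only [dif_pos h]
      have hpos := (fstp ⟨b.1, memtp' b h⟩).2
      simp only [dif_pos hpos]
      apply Subtype.ext
      have key : ∀ hv, (⟨(f.symm ⟨b.1, memtp' b h⟩).1, hv⟩ : {i : ℤ // i ∈ sp})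
          = f.symm ⟨b.1, memtp' b h⟩ := fun hv => rfl
      show (f _).1 = b.1
      rw [key, f.apply_symm_apply]
    · simp only [dif_neg h]
      have hpos := (fstp ⟨-b.1, memtp b h⟩).2
      have hneg : ¬ 0 < -(f.symm ⟨-b.1, memtp b h⟩).1 := by omega
      simp only [dif_neg hneg]
      apply Subtype.ext
      show -(f _).1 = b.1
      have key : ∀ hv, (⟨-(-(f.symm ⟨-b.1, memtp b h⟩).1), hv⟩ : {i : ℤ // i ∈ sp})
          = f.symm ⟨-b.1, memtp b h⟩ := fun hv => Subtype.ext (neg_neg _)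
      rw [key, f.apply_symm_apply]
      simp
  · intro a b
    simp only [Equiv.coe_fn_mk]
    by_cases ha : 0 < a.1 <;> by_cases hb : 0 < b.1
    · simp only [dif_pos ha, dif_pos hb]
      have h1 := (ftp ⟨a.1, memsp' a ha⟩).2
      have h2 := (ftp ⟨b.1, memsp' b hb⟩).2
      constructor
      · intro h; omega
      · intro h; omega
    · simp only [dif_pos ha, dif_neg hb]
      constructor
      · intro h
        have hab : (⟨-b.1, memsp b hb⟩ : {i : ℤ // i ∈ sp}) = ⟨a.1, memsp' a ha⟩ := Subtype.ext (by simp [h])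
        rw [hab]
      · intro h
        have h' : (f ⟨-b.1, memsp b hb⟩).1 = (f ⟨a.1, memsp' a ha⟩).1 := by omega
        have h'' := f.injective (Subtype.ext h')
        have h3 := congrArg Subtype.val h''
        simp only at h3
        omega
    · simp only [dif_neg ha, dif_pos hb]
      constructor
      · intro h
        have hab : (⟨-a.1, memsp a ha⟩ : {i : ℤ // i ∈ sp}) = ⟨b.1, memsp' b hb⟩ := Subtype.ext (by simp [h])
        rw [hab]; ring
      · intro h
        have h' : (f ⟨b.1, memsp' b hb⟩).1 = (f ⟨-a.1, memsp a ha⟩).1 := by omega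
        have h'' := f.injective (Subtype.ext h')
        have h3 := congrArg Subtype.val h''
        simp only at h3
        omega
    · simp only [dif_neg ha, dif_neg hb]
      have h1 := (ftp ⟨-a.1, memsp a ha⟩).2
      have h2 := (ftp ⟨-b.1, memsp b hb⟩).2
      have h0a : a.1 ≠ 0 := fun h => hs0 (h ▸ a.2)
      have h0b : b.1 ≠ 0 := fun h => hs0 (h ▸ b.2)
      constructor
      · intro h; omega
      · intro h; omega

/-- The big star of a k-element singular subset S of Π_n (1 ≤ k ≤ n-1) is isomorphic to
the thin polar space Π_{n-k}: the map i ↦ S ∪ {i} is a bijection from the set of points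
collinear with all of S and not in S onto the big star, and this point set with the
inherited collinearity is isomorphic to Π_{n-k}. -/
theorem stmt15 (n k : ℕ) (hk1 : 1 ≤ k) (hk2 : k ≤ n - 1)
    (S : Finset ℤ) (hS : Sing n S) (hSc : S.card = k) :
    Set.BijOn (fun i => insert i S)
      {i : ℤ | i ∈ polarJ n ∧ i ∉ S ∧ -i ∉ S}
      {X : Finset ℤ | Sing n X ∧ X.card = k + 1 ∧ S ⊆ X} ∧
    ∃ e : {i : ℤ // i ∈ polarJ n ∧ i ∉ S ∧ -i ∉ S} ≃ {j : ℤ // j ∈ polarJ (n - k)},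
      ∀ a b : {i : ℤ // i ∈ polarJ n ∧ i ∉ S ∧ -i ∉ S},
        (b.1 = -a.1 ↔ (e b).1 = -(e a).1) := by
  classical
  constructor
  · refine ⟨?_, ?_, ?_⟩
    · -- MapsTo
      rintro i ⟨hiJ, hiS, hniS⟩
      refine ⟨⟨?_, ?_⟩, ?_, subset_insert _ _⟩
      · exact insert_subset hiJ hS.1
      · intro j hj
        rcases mem_insert.mp hj with rfl | hjS
        · simp only [mem_insert]
          push_neg
          refine ⟨?_, hniS⟩
          intro h
          exact polarJ_ne_zero hiJ (by omega)
        · simp only [mem_insert]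
          push_neg
          refine ⟨?_, hS.2 j hjS⟩
          intro h
          exact hniS (by rw [← h, neg_neg]; exact hjS)
      · rw [card_insert_of_notMem hiS, hSc]
    · -- InjOn
      rintro i ⟨hiJ, hiS, _⟩ j ⟨hjJ, hjS, _⟩ h
      simp only at h
      have : i ∈ insert j S := h ▸ mem_insert_self i S
      rcases mem_insert.mp this with h' | h'
      · exact h'
      · exact absurd h' hiS
    · -- SurjOn
      rintro X ⟨hXsing, hXcard, hSX⟩
      have hne : S ≠ X := by
        intro h; rw [h] at hSc; omega
      have hssub : S ⊂ X := Finset.ssubset_iff_subset_ne.mpr ⟨hSX, hne⟩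
      obtain ⟨i, hiX, hiS⟩ := Finset.exists_of_ssubset hssub
      refine ⟨i, ⟨hXsing.1 hiX, hiS, ?_⟩, ?_⟩
      · intro h
        exact hXsing.2 i hiX (hSX h)
      · simp only
        apply Finset.eq_of_subset_of_card_le
        · exact insert_subset hiX hSX
        · rw [card_insert_of_notMem hiS, hSc, hXcard]
  · -- Part 2
    set s := (polarJ n).filter (fun i => i ∉ S ∧ -i ∉ S) with hsdef
    have hmem : ∀ i : ℤ, (i ∈ polarJ n ∧ i ∉ S ∧ -i ∉ S) ↔ i ∈ s := by
      intro i; simp [hsdef, mem_filter]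
    have hs : ∀ i ∈ s, -i ∈ s := by
      intro i hi
      rw [mem_filter] at hi ⊢
      obtain ⟨h1, h2, h3⟩ := hi
      exact ⟨polarJ_neg h1, h3, by simpa using h2⟩
    have hs0 : (0:ℤ) ∉ s := by
      intro h
      exact polarJ_ne_zero (mem_filter.mp h).1 rfl
    have ht : ∀ i ∈ polarJ (n-k), -i ∈ polarJ (n-k) := fun i hi => polarJ_neg hi
    have ht0 : (0:ℤ) ∉ polarJ (n-k) := fun h => polarJ_ne_zero h rfl
    have hscard : s.card = (polarJ (n-k)).card := by
      have hT : (S ∪ S.image (fun i => -i)) ⊆ polarJ n := by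
        apply union_subset hS.1
        intro x hx
        simp only [mem_image] at hx
        obtain ⟨y, hy, rfl⟩ := hx
        exact polarJ_neg (hS.1 hy)
      have hseq : s = polarJ n \ (S ∪ S.image (fun i => -i)) := by
        ext x
        simp only [hsdef, mem_filter, mem_sdiff, mem_union, mem_image]
        constructor
        · rintro ⟨h1, h2, h3⟩
          refine ⟨h1, ?_⟩
          push_neg
          refine ⟨h2, ?_⟩
          rintro y hy rfl
          exact h3 (by simpa using hy)
        · rintro ⟨h1, h2⟩
          push_neg at h2
          refine ⟨h1, h2.1, fun h => ?_⟩
          exact h2.2 (-x) h (by ring)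
      have hdisj : Disjoint S (S.image (fun i => -i)) := by
        rw [disjoint_left]
        intro x hx hx'
        simp only [mem_image] at hx'
        obtain ⟨y, hy, rfl⟩ := hx'
        exact hS.2 y hy (by simpa using hx)
      have hTcard : (S ∪ S.image (fun i => -i)).card = 2 * k := by
        rw [card_union_of_disjoint hdisj, card_image_of_injective _ neg_injective, hSc]
        omega
      rw [hseq, card_sdiff_of_subset hT, hTcard, polarJ_card, polarJ_card]
      omega
    obtain ⟨e, he⟩ := negEquiv s (polarJ (n-k)) hs hs0 ht ht0 hscard
    refine ⟨(Equiv.subtypeEquivRight hmem).trans e, ?_⟩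
    intro a b
    simp only [Equiv.trans_apply]
    exact he ((Equiv.subtypeEquivRight hmem) a) ((Equiv.subtypeEquivRight hmem) b)
end

section
/- Let X, Y be (k+1)-element singular subsets of Π_n with k ≤ n−2, |X ∩ Y| ≤ k−1, and suppose there is i ∈ X \ Y collinear to all points of Y and j ∈ Y \ X collinear to all points of X. Then there exists a (k+1)-element singular subset X' adjacent to X in Γ_k(n) with |X' ∩ Y| = |X ∩ Y| + 1 and still containing a point of X' \ Y collinear to all points of Y. -/
open Finset

/-- Inductive step of the distance formula: if |X ∩ Y| ≤ k-1, some point of X \ Y is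
collinear to all of Y and some point of Y \ X is collinear to all of X, then there is a
vertex X' adjacent to X in Γ_k(n) with |X' ∩ Y| = |X ∩ Y| + 1 which still contains a
point of X' \ Y collinear to all points of Y. -/
theorem stmt16 (n k : ℕ) (hkn : k + 2 ≤ n) (X Y : Finset ℤ)
    (hX : Sing n X) (hY : Sing n Y) (hXc : X.card = k + 1) (hYc : Y.card = k + 1)
    (hint : (X ∩ Y).card + 1 ≤ k)
    (hp : ∃ i ∈ X \ Y, -i ∉ Y) (hq : ∃ j ∈ Y \ X, -j ∉ X) :
    ∃ X' : Finset ℤ, Sing n X' ∧ X'.card = k + 1 ∧ X ≠ X' ∧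
      (X ∩ X').card = k ∧ Sing n (X ∪ X') ∧
      (X' ∩ Y).card = (X ∩ Y).card + 1 ∧
      ∃ p ∈ X' \ Y, -p ∉ Y := by
  obtain ⟨i, hiXY, hiY⟩ := hp
  obtain ⟨j, hjYX, hjX⟩ := hq
  simp only [mem_sdiff] at hiXY hjYX
  obtain ⟨hiX, hiNY⟩ := hiXY
  obtain ⟨hjY, hjNX⟩ := hjYX
  have hcardsd : 2 ≤ (X \ Y).card := by
    have h1 := card_sdiff_add_card_inter X Y
    omega
  obtain ⟨i', hi'mem, hi'ne⟩ : ∃ i' ∈ X \ Y, i' ≠ i := by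
    by_contra h
    push_neg at h
    have hsub : X \ Y ⊆ {i} := fun x hx => mem_singleton.mpr (h x hx)
    have := card_le_card hsub
    simp only [card_singleton] at this
    omega
  simp only [mem_sdiff] at hi'mem
  obtain ⟨hi'X, hi'NY⟩ := hi'mem
  have hjne0 : j ≠ 0 := by
    have := hY.1 hjY
    exact (Finset.mem_erase.mp this).1
  have hU : Sing n (insert j X) := by
    constructor
    · intro x hx
      rcases mem_insert.mp hx with h | h
      · exact h ▸ hY.1 hjY
      · exact hX.1 h
    · intro a ha hna
      rcases mem_insert.mp ha with h | h
      · subst h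
        rcases mem_insert.mp hna with h2 | h2
        · omega
        · exact hjX h2
      · rcases mem_insert.mp hna with h2 | h2
        · exact hjX (by rw [show -j = a by omega]; exact h)
        · exact hX.2 a h h2
  have hjNE : j ∉ X.erase i' := fun h => hjNX (mem_of_mem_erase h)
  refine ⟨insert j (X.erase i'), ?_, ?_, ?_, ?_, ?_, ?_, ?_⟩
  · refine ⟨fun x hx => hU.1 ?_, fun a ha hna => hU.2 a ?_ ?_⟩
    · rcases mem_insert.mp hx with h | h
      · exact h ▸ mem_insert_self j X
      · exact mem_insert_of_mem (mem_of_mem_erase h)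
    · rcases mem_insert.mp ha with h | h
      · exact h ▸ mem_insert_self j X
      · exact mem_insert_of_mem (mem_of_mem_erase h)
    · rcases mem_insert.mp hna with h | h
      · exact h ▸ mem_insert_self j X
      · exact mem_insert_of_mem (mem_of_mem_erase h)
  · rw [card_insert_of_notMem hjNE, card_erase_of_mem hi'X, hXc]; omega
  · intro h
    exact hjNX (h ▸ mem_insert_self j (X.erase i'))
  · have heq : X ∩ insert j (X.erase i') = X.erase i' := by
      ext x
      simp only [mem_inter, mem_insert, mem_erase]
      constructor
      · rintro ⟨hx, h | ⟨hne, _⟩⟩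
        · exact absurd (h ▸ hx) hjNX
        · exact ⟨hne, hx⟩
      · rintro ⟨hne, hx⟩
        exact ⟨hx, Or.inr ⟨hne, hx⟩⟩
    rw [heq, card_erase_of_mem hi'X, hXc]; omega
  · have heq : X ∪ insert j (X.erase i') = insert j X := by
      ext x
      simp only [mem_union, mem_insert, mem_erase]
      tauto
    rw [heq]; exact hU
  · have heq : insert j (X.erase i') ∩ Y = insert j (X ∩ Y) := by
      ext x
      simp only [mem_inter, mem_insert, mem_erase]
      constructor
      · rintro ⟨h | ⟨hne, hx⟩, hy⟩
        · exact Or.inl h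
        · exact Or.inr ⟨hx, hy⟩
      · rintro (h | ⟨hx, hy⟩)
        · exact ⟨Or.inl h, h ▸ hjY⟩
        · exact ⟨Or.inr ⟨fun he => hi'NY (he ▸ hy), hx⟩, hy⟩
    rw [heq, card_insert_of_notMem (fun h => hjNX (mem_inter.mp h).1)]
  · exact ⟨i, mem_sdiff.mpr ⟨mem_insert_of_mem (mem_erase.mpr ⟨Ne.symm hi'ne, hiX⟩), hiNY⟩, hiY⟩
end
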